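/- arXiv:2505.00504 — 8 statements merged into one kernel-verified Lean document; each statement's English description precedes it below -/
import Mathlib

section
/- Let G be a graph and S = {x, y, z} ⊆ V(G) with d(x) ≤ d(y) ≤ d(z). If S is a feasible set, then one can delete at most p(S) + q(S) + max{p(S), q(S)} vertices from G (none of them in S) such that in the resulting induced subgraph the three vertices x, y, z all have the same degree, where p(S) = d(z) − d(y) and q(S) = d(y) − d(x). -/
/-- Degree of `v` in `G`. -/
noncomputable def deg {V : Type*} (G : SimpleGraph V) (v : V) : ℕ :=
  Nat.card ↥(G.neighborSet v)

/-- Degree of `v` in the induced subgraph `G - D` obtained by deleting the vertex set `D`. -/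
noncomputable def delDeg {V : Type*} (G : SimpleGraph V) (D : Finset V) (v : V) : ℕ :=
  Nat.card ↥(G.neighborSet v \ ↑D)
/-- `{x,y,z}` with `deg x ≤ deg y ≤ deg z` is balanceable: (C1)-(C4). -/
def Balanceable {V : Type*} (G : SimpleGraph V) (x y z : V) : Prop :=
  (¬G.Adj x y ∧ ¬G.Adj x z ∧ ¬G.Adj y z) ∨
  (G.Adj x y ∧ G.Adj x z ∧ G.Adj y z) ∨
  (G.Adj x y ∧ ¬G.Adj x z ∧ ¬G.Adj y z) ∨
  (G.Adj x y ∧ G.Adj x z ∧ ¬G.Adj y z)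

/-- `{x,y,z}` with `deg x ≤ deg y ≤ deg z` is accessible: (C5)-(C8). -/
def Accessible {V : Type*} (G : SimpleGraph V) (x y z : V) : Prop :=
  (¬G.Adj x y ∧ G.Adj x z ∧ ¬G.Adj y z ∧
    (G.neighborSet y \ G.neighborSet z).Nonempty) ∨
  (G.Adj x y ∧ ¬G.Adj x z ∧ G.Adj y z ∧
    (G.neighborSet x \ insert y (G.neighborSet y)).Nonempty) ∨
  (¬G.Adj x y ∧ ¬G.Adj x z ∧ G.Adj y z ∧
    (G.neighborSet x \ G.neighborSet y).Nonempty ∧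
    (G.neighborSet x \ G.neighborSet z).Nonempty) ∨
  (¬G.Adj x y ∧ G.Adj x z ∧ G.Adj y z ∧
    (G.neighborSet x \ insert z (G.neighborSet z)).Nonempty ∧
    (G.neighborSet y \ insert z (G.neighborSet z)).Nonempty)

/-- Feasible = balanceable or accessible. -/
def Feasible {V : Type*} (G : SimpleGraph V) (x y z : V) : Prop :=
  Balanceable G x y z ∨ Accessible G x y z

private lemma master_numeric (B C E F p q : ℕ) (h1 : q ≤ B+F) (h2 : p ≤ C+E)
    (h3 : p+q ≤ C+F) :
    ∃ ny nz ne nf : ℕ, ny ≤ B ∧ nz ≤ C ∧ ne ≤ E ∧ nf ≤ F ∧ ny + nf = q + ne ∧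
      nz + ne = p + ny ∧ ny+nz+ne+nf ≤ p+q+max p q := by
  rcases le_or_gt (p+q) (C + min q F) with h|h
  · exact ⟨q - min q F, p + q - min q F, 0, min q F, by omega, by omega, by omega,
      by omega, by omega, by omega, by omega⟩
  · exact ⟨0, C, p - C, q + (p - C), by omega, by omega, by omega, by omega,
      by omega, by omega, by omega⟩

private lemma card_diff_eq {V : Type*} [DecidableEq V] (P Q : Finset V) :
    (P \ Q).card + Q.card = P.card + (Q \ P).card := by
  have a := Finset.card_sdiff_add_card_inter P Q
  have b := Finset.card_sdiff_add_card_inter Q P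
  rw [Finset.inter_comm] at b
  omega

set_option maxHeartbeats 1000000 in
/-- If `S = {x,y,z}` with `d(x) ≤ d(y) ≤ d(z)` is feasible, one can delete at most
`p(S) + q(S) + max{p(S), q(S)}` vertices (none in `S`) to equate the degrees of `x, y, z`. -/
theorem stmt_2 {V : Type*} [Fintype V] (G : SimpleGraph V) (x y z : V)
    (hxy : x ≠ y) (hxz : x ≠ z) (hyz : y ≠ z)
    (h1 : deg G x ≤ deg G y) (h2 : deg G y ≤ deg G z)
    (hf : Feasible G x y z) :
    ∃ D : Finset V,
      D.card ≤ (deg G z - deg G y) + (deg G y - deg G x) +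
        max (deg G z - deg G y) (deg G y - deg G x) ∧
      x ∉ D ∧ y ∉ D ∧ z ∉ D ∧
      delDeg G D x = delDeg G D y ∧ delDeg G D y = delDeg G D z := by
  classical
  set S : Finset V := {x, y, z} with hSdef
  set N : V → Finset V := fun v => (G.neighborSet v).toFinset with hNdef
  have hmem : ∀ u v, v ∈ N u ↔ G.Adj u v := by
    intro u v; simp [hNdef]
  have hdeg : ∀ u, deg G u = (N u).card := by
    intro u
    rw [deg, Nat.card_eq_fintype_card, hNdef, Set.toFinset_card]
  have hdel : ∀ (D : Finset V) u, delDeg G D u = (N u \ D).card := by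
    intro D u
    rw [delDeg, Nat.card_eq_fintype_card, ← Set.toFinset_card]
    congr 1
    ext v
    simp [hNdef]
  -- count of S-neighbors
  have hS : ∀ u a b : V, u ≠ a → u ≠ b → a ≠ b → ({u, a, b} : Finset V) = S →
      (N u ∩ S).card = (if G.Adj u a then 1 else 0) + (if G.Adj u b then 1 else 0) := by
    intro u a b hua hub hab hset
    rw [← hset]
    have h : N u ∩ ({u, a, b} : Finset V)
        = ({a, b} : Finset V).filter (fun v => G.Adj u v) := by
      ext v
      simp only [Finset.mem_inter, hmem, Finset.mem_insert, Finset.mem_singleton,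
        Finset.mem_filter]
      constructor
      · rintro ⟨hadj, rfl | rfl | rfl⟩
        · exact absurd hadj (G.irrefl)
        · exact ⟨Or.inl rfl, hadj⟩
        · exact ⟨Or.inr rfl, hadj⟩
      · rintro ⟨rfl | rfl, hadj⟩ <;> tauto
    rw [h, Finset.filter_insert, Finset.filter_singleton]
    split_ifs <;> simp_all [Finset.card_insert_of_notMem]
  have flip : ∀ u v : V, (if G.Adj u v then 1 else 0) = (if G.Adj v u then 1 else 0) := by
    intro u v
    by_cases hc : G.Adj u v
    · rw [if_pos hc, if_pos hc.symm]
    · rw [if_neg hc, if_neg (fun h => hc h.symm)]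
  have hsetY : ({y, x, z} : Finset V) = S := by
    rw [hSdef]
    ext v
    simp only [Finset.mem_insert, Finset.mem_singleton]
    tauto
  have hsetZ : ({z, x, y} : Finset V) = S := by
    rw [hSdef]
    ext v
    simp only [Finset.mem_insert, Finset.mem_singleton]
    tauto
  have hSx := hS x y z hxy hxz hyz rfl
  have hSy : (N y ∩ S).card = (if G.Adj x y then 1 else 0) + (if G.Adj y z then 1 else 0) := by
    rw [hS y x z hxy.symm hyz hxz hsetY, flip y x]
  have hSz : (N z ∩ S).card = (if G.Adj x z then 1 else 0) + (if G.Adj y z then 1 else 0) := by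
    rw [hS z x y hxz.symm hyz.symm hxy hsetZ, flip z x, flip z y]
  set Nx' : Finset V := N x \ S with hNx'
  set Ny' : Finset V := N y \ S with hNy'
  set Nz' : Finset V := N z \ S with hNz'
  have hcx : Nx'.card + (N x ∩ S).card = deg G x := by
    rw [hdeg]; exact Finset.card_sdiff_add_card_inter _ _
  have hcy : Ny'.card + (N y ∩ S).card = deg G y := by
    rw [hdeg]; exact Finset.card_sdiff_add_card_inter _ _
  have hcz : Nz'.card + (N z ∩ S).card = deg G z := by
    rw [hdeg]; exact Finset.card_sdiff_add_card_inter _ _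
  have e1 := card_diff_eq Ny' Nx'
  have e2 := card_diff_eq Nz' Ny'
  have e3 := card_diff_eq Nz' Nx'
  have hxS : x ∈ S := by simp [hSdef]
  have hyS : y ∈ S := by simp [hSdef]
  have hzS : z ∈ S := by simp [hSdef]
  -- the three key inequalities
  obtain ⟨W1, W2, W3⟩ : deg G y ≤ deg G x + (Ny' \ Nx').card ∧
      deg G z ≤ deg G y + (Nz' \ Ny').card ∧
      deg G z ≤ deg G x + (Nz' \ Nx').card := by
    -- helper to turn Nonempty witnesses into cardinality facts
    have wit : ∀ (w u v : V), w ∈ N u → w ∉ N v → w ∉ S →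
        1 ≤ ((N u \ S) \ (N v \ S)).card := by
      intro w u v h1' h2' h3'
      refine Finset.card_pos.mpr ⟨w, ?_⟩
      simp only [Finset.mem_sdiff]
      exact ⟨⟨h1', h3'⟩, fun hc => h2' hc.1⟩
    have hnS : ∀ w, w ≠ x → w ≠ y → w ≠ z → w ∉ S := by
      intro w a b c
      simp [hSdef, a, b, c]
    rcases hf with (⟨a,b,c⟩|⟨a,b,c⟩|⟨a,b,c⟩|⟨a,b,c⟩)|(⟨a,b,c,d⟩|⟨a,b,c,d⟩|⟨a,b,c,d,e⟩|⟨a,b,c,d,e⟩)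
    · simp only [a, b, c, if_true, if_false] at hSx hSy hSz; omega
    · simp only [a, b, c, if_true, if_false] at hSx hSy hSz; omega
    · simp only [a, b, c, if_true, if_false] at hSx hSy hSz; omega
    · simp only [a, b, c, if_true, if_false] at hSx hSy hSz; omega
    · -- C5: only xz; extra: N(y) \ N(z) nonempty, gives (Ny' \ Nz').card ≥ 1
      obtain ⟨w, hw1, hw2⟩ := d
      have hw1' : w ∈ N y := by rw [hmem]; exact hw1
      have hw2' : w ∉ N z := by rw [hmem]; exact fun h => hw2 h
      have hwx : w ≠ x := fun h => a (by rw [h] at hw1; exact (G.adj_comm y x).mp hw1)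
      have hwy : w ≠ y := fun h => G.irrefl (by rw [h] at hw1; exact hw1)
      have hwz : w ≠ z := fun h => c (by rw [h] at hw1; exact hw1)
      have hext := wit w y z hw1' hw2' (hnS w hwx hwy hwz)
      simp only [← hNy', ← hNz'] at hext
      have e4 := card_diff_eq Ny' Nz'
      simp only [a, b, c, if_true, if_false] at hSx hSy hSz
      omega
    · -- C6: xy, yz; extra: N(x) \ N[y] nonempty
      obtain ⟨w, hw1, hw2⟩ := d
      simp only [Set.mem_insert_iff, not_or] at hw2
      have hw1' : w ∈ N x := by rw [hmem]; exact hw1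
      have hw2' : w ∉ N y := by rw [hmem]; exact fun h => hw2.2 h
      have hwx : w ≠ x := fun h => G.irrefl (by rw [h] at hw1; exact hw1)
      have hwy : w ≠ y := hw2.1
      have hwz : w ≠ z := fun h => b (by rw [h] at hw1; exact hw1)
      have hext := wit w x y hw1' hw2' (hnS w hwx hwy hwz)
      simp only [← hNx', ← hNy'] at hext
      have e4 := card_diff_eq Nx' Ny'
      simp only [a, b, c, if_true, if_false] at hSx hSy hSz
      omega
    · -- C7: only yz; extras: N(x)\N(y), N(x)\N(z) nonempty
      obtain ⟨w, hw1, hw2⟩ := d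
      obtain ⟨w2, hv1, hv2⟩ := e
      have hw1' : w ∈ N x := by rw [hmem]; exact hw1
      have hw2' : w ∉ N y := by rw [hmem]; exact fun h => hw2 h
      have hwx : w ≠ x := fun h => G.irrefl (by rw [h] at hw1; exact hw1)
      have hwy : w ≠ y := fun h => a (by rw [h] at hw1; exact hw1)
      have hwz : w ≠ z := fun h => b (by rw [h] at hw1; exact hw1)
      have hext := wit w x y hw1' hw2' (hnS w hwx hwy hwz)
      simp only [← hNx', ← hNy'] at hext
      have hv1' : w2 ∈ N x := by rw [hmem]; exact hv1
      have hv2' : w2 ∉ N z := by rw [hmem]; exact fun h => hv2 h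
      have hvx : w2 ≠ x := fun h => G.irrefl (by rw [h] at hv1; exact hv1)
      have hvy : w2 ≠ y := fun h => a (by rw [h] at hv1; exact hv1)
      have hvz : w2 ≠ z := fun h => b (by rw [h] at hv1; exact hv1)
      have hext2 := wit w2 x z hv1' hv2' (hnS w2 hvx hvy hvz)
      simp only [← hNx', ← hNz'] at hext2
      have e4 := card_diff_eq Nx' Ny'
      have e5 := card_diff_eq Nx' Nz'
      simp only [a, b, c, if_true, if_false] at hSx hSy hSz
      omega
    · -- C8: xz, yz; extras: N(x)\N[z], N(y)\N[z] nonempty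
      obtain ⟨w, hw1, hw2⟩ := d
      obtain ⟨w2, hv1, hv2⟩ := e
      simp only [Set.mem_insert_iff, not_or] at hw2 hv2
      have hw1' : w ∈ N x := by rw [hmem]; exact hw1
      have hw2' : w ∉ N z := by rw [hmem]; exact fun h => hw2.2 h
      have hwx : w ≠ x := fun h => G.irrefl (by rw [h] at hw1; exact hw1)
      have hwy : w ≠ y := fun h => a (by rw [h] at hw1; exact hw1)
      have hwz : w ≠ z := hw2.1
      have hext := wit w x z hw1' hw2' (hnS w hwx hwy hwz)
      simp only [← hNx', ← hNz'] at hext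
      have hv1' : w2 ∈ N y := by rw [hmem]; exact hv1
      have hv2' : w2 ∉ N z := by rw [hmem]; exact fun h => hv2.2 h
      have hvx : w2 ≠ x := fun h => a (by rw [h] at hv1; exact (G.adj_comm y x).mp hv1)
      have hvy : w2 ≠ y := fun h => G.irrefl (by rw [h] at hv1; exact hv1)
      have hvz : w2 ≠ z := hv2.1
      have hext2 := wit w2 y z hv1' hv2' (hnS w2 hvx hvy hvz)
      simp only [← hNy', ← hNz'] at hext2
      have e4 := card_diff_eq Nx' Nz'
      have e5 := card_diff_eq Ny' Nz'
      simp only [a, b, c, if_true, if_false] at hSx hSy hSz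
      omega
  -- region sets
  set B' : Finset V := (Ny' \ Nx') \ Nz' with hB'
  set F' : Finset V := (Ny' \ Nx') ∩ Nz' with hF'
  set C' : Finset V := (Nz' \ Ny') \ Nx' with hC'
  set E' : Finset V := (Nz' \ Ny') ∩ Nx' with hE'
  have hBF : B'.card + F'.card = (Ny' \ Nx').card := Finset.card_sdiff_add_card_inter _ _
  have hCE : C'.card + E'.card = (Nz' \ Ny').card := Finset.card_sdiff_add_card_inter _ _
  have hCF : C'.card + F'.card = (Nz' \ Nx').card := by
    have h1' : C' = (Nz' \ Nx') \ Ny' := by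
      rw [hC']; ext v; simp only [Finset.mem_sdiff]; tauto
    have h2' : F' = (Nz' \ Nx') ∩ Ny' := by
      rw [hF']; ext v; simp only [Finset.mem_sdiff, Finset.mem_inter]; tauto
    rw [h1', h2']; exact Finset.card_sdiff_add_card_inter _ _
  set p := deg G z - deg G y with hp
  set q := deg G y - deg G x with hq
  obtain ⟨ny, nz, ne, nf, hny, hnz, hne, hnf, heq1, heq2, htot⟩ :=
    master_numeric B'.card C'.card E'.card F'.card p q (by omega) (by omega) (by omega)
  obtain ⟨Dy, hDyB, hDyc⟩ := Finset.exists_subset_card_eq (s := B') hny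
  obtain ⟨Dz, hDzC, hDzc⟩ := Finset.exists_subset_card_eq (s := C') hnz
  obtain ⟨De, hDeE, hDec⟩ := Finset.exists_subset_card_eq (s := E') hne
  obtain ⟨Df, hDfF, hDfc⟩ := Finset.exists_subset_card_eq (s := F') hnf
  -- membership characterizations
  have memDy : ∀ v ∈ Dy, v ∈ N y ∧ v ∉ N x ∧ v ∉ N z ∧ v ∉ S := by
    intro v hv
    have := hDyB hv
    rw [hB'] at this
    simp only [Finset.mem_sdiff, hNy', hNx', hNz'] at this
    tauto
  have memDz : ∀ v ∈ Dz, v ∈ N z ∧ v ∉ N y ∧ v ∉ N x ∧ v ∉ S := by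
    intro v hv
    have := hDzC hv
    rw [hC'] at this
    simp only [Finset.mem_sdiff, hNy', hNx', hNz'] at this
    tauto
  have memDe : ∀ v ∈ De, v ∈ N z ∧ v ∉ N y ∧ v ∈ N x ∧ v ∉ S := by
    intro v hv
    have := hDeE hv
    rw [hE'] at this
    simp only [Finset.mem_sdiff, Finset.mem_inter, hNy', hNx', hNz'] at this
    tauto
  have memDf : ∀ v ∈ Df, v ∈ N y ∧ v ∉ N x ∧ v ∈ N z ∧ v ∉ S := by
    intro v hv
    have := hDfF hv
    rw [hF'] at this
    simp only [Finset.mem_sdiff, Finset.mem_inter, hNy', hNx', hNz'] at this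
    tauto
  set D : Finset V := Dy ∪ Dz ∪ De ∪ Df with hD
  -- disjointness
  have dyz : Disjoint Dy Dz := Finset.disjoint_left.mpr fun v hv hv' =>
    ((memDz v hv').2.1) (memDy v hv).1
  have dye : Disjoint Dy De := Finset.disjoint_left.mpr fun v hv hv' =>
    ((memDe v hv').2.1) (memDy v hv).1
  have dyf : Disjoint Dy Df := Finset.disjoint_left.mpr fun v hv hv' =>
    ((memDy v hv).2.2.1) (memDf v hv').2.2.1
  have dze : Disjoint Dz De := Finset.disjoint_left.mpr fun v hv hv' =>
    ((memDz v hv).2.2.1) (memDe v hv').2.2.1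
  have dzf : Disjoint Dz Df := Finset.disjoint_left.mpr fun v hv hv' =>
    ((memDz v hv).2.1) (memDf v hv').1
  have def' : Disjoint De Df := Finset.disjoint_left.mpr fun v hv hv' =>
    ((memDe v hv).2.1) (memDf v hv').1
  have hDcard : D.card = ny + nz + ne + nf := by
    rw [hD, Finset.card_union_of_disjoint, Finset.card_union_of_disjoint,
      Finset.card_union_of_disjoint, hDyc, hDzc, hDec, hDfc]
    · exact dyz
    · exact Finset.disjoint_union_left.mpr ⟨dye, dze⟩
    · exact Finset.disjoint_union_left.mpr ⟨Finset.disjoint_union_left.mpr ⟨dyf, dzf⟩, def'⟩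
  have hmemD : ∀ v ∈ D, v ∉ S := by
    intro v hv
    rw [hD] at hv
    simp only [Finset.mem_union] at hv
    rcases hv with ((h|h)|h)|h
    · exact (memDy v h).2.2.2
    · exact (memDz v h).2.2.2
    · exact (memDe v h).2.2.2
    · exact (memDf v h).2.2.2
  -- intersections with neighborhoods
  have hix : N x ∩ D = De := by
    ext v
    simp only [Finset.mem_inter, hD, Finset.mem_union]
    constructor
    · rintro ⟨hvx, ((h|h)|h)|h⟩
      · exact absurd hvx (memDy v h).2.1
      · exact absurd hvx (memDz v h).2.2.1
      · exact h
      · exact absurd hvx (memDf v h).2.1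
    · intro h
      exact ⟨(memDe v h).2.2.1, by tauto⟩
  have hiy : N y ∩ D = Dy ∪ Df := by
    ext v
    simp only [Finset.mem_inter, hD, Finset.mem_union]
    constructor
    · rintro ⟨hvy, ((h|h)|h)|h⟩
      · exact Or.inl h
      · exact absurd hvy (memDz v h).2.1
      · exact absurd hvy (memDe v h).2.1
      · exact Or.inr h
    · rintro (h|h)
      · exact ⟨(memDy v h).1, by tauto⟩
      · exact ⟨(memDf v h).1, by tauto⟩
  have hiz : N z ∩ D = Dz ∪ De ∪ Df := by
    ext v
    simp only [Finset.mem_inter, hD, Finset.mem_union]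
    constructor
    · rintro ⟨hvz, ((h|h)|h)|h⟩
      · exact absurd hvz (memDy v h).2.2.1
      · exact Or.inl (Or.inl h)
      · exact Or.inl (Or.inr h)
      · exact Or.inr h
    · rintro ((h|h)|h)
      · exact ⟨(memDz v h).1, by tauto⟩
      · exact ⟨(memDe v h).1, by tauto⟩
      · exact ⟨(memDf v h).2.2.1, by tauto⟩
  have cix : (N x ∩ D).card = ne := by rw [hix, hDec]
  have ciy : (N y ∩ D).card = ny + nf := by
    rw [hiy, Finset.card_union_of_disjoint dyf, hDyc, hDfc]
  have ciz : (N z ∩ D).card = nz + ne + nf := by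
    rw [hiz, Finset.card_union_of_disjoint
      (Finset.disjoint_union_left.mpr ⟨dzf, def'⟩),
      Finset.card_union_of_disjoint dze, hDzc, hDec, hDfc]
  have dx' : delDeg G D x + ne = deg G x := by
    rw [hdel, hdeg, ← cix]; exact Finset.card_sdiff_add_card_inter _ _
  have dy' : delDeg G D y + (ny + nf) = deg G y := by
    rw [hdel, hdeg, ← ciy]; exact Finset.card_sdiff_add_card_inter _ _
  have dz' : delDeg G D z + (nz + ne + nf) = deg G z := by
    rw [hdel, hdeg, ← ciz]; exact Finset.card_sdiff_add_card_inter _ _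
  refine ⟨D, by omega, fun h => hmemD x h hxS, fun h => hmemD y h hyS,
    fun h => hmemD z h hzS, by omega, by omega⟩
end

section
/- Let G be a graph and X = {v1, v2, v3, v4} ⊆ V(G) with d(v1) ≤ d(v2) ≤ d(v3) ≤ d(v4). If no 3-element subset of X is balanceable, then G[X] is an induced path on 4 vertices whose two endpoints are v1 and v2. -/
set_option maxHeartbeats 1000000 in
lemma path_key (e12 e13 e14 e23 e24 e34 : Prop)
    (h1 : ¬((¬e12 ∧ ¬e13 ∧ ¬e23) ∨ (e12 ∧ e13 ∧ e23) ∨ (e12 ∧ ¬e13 ∧ ¬e23) ∨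
      (e12 ∧ e13 ∧ ¬e23)))
    (h2 : ¬((¬e12 ∧ ¬e14 ∧ ¬e24) ∨ (e12 ∧ e14 ∧ e24) ∨ (e12 ∧ ¬e14 ∧ ¬e24) ∨
      (e12 ∧ e14 ∧ ¬e24)))
    (h3 : ¬((¬e13 ∧ ¬e14 ∧ ¬e34) ∨ (e13 ∧ e14 ∧ e34) ∨ (e13 ∧ ¬e14 ∧ ¬e34) ∨
      (e13 ∧ e14 ∧ ¬e34)))
    (h4 : ¬((¬e23 ∧ ¬e24 ∧ ¬e34) ∨ (e23 ∧ e24 ∧ e34) ∨ (e23 ∧ ¬e24 ∧ ¬e34) ∨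
      (e23 ∧ e24 ∧ ¬e34))) :
    (e13 ∧ e34 ∧ e24 ∧ ¬e14 ∧ ¬e23 ∧ ¬e12) ∨
      (e14 ∧ e34 ∧ e23 ∧ ¬e13 ∧ ¬e24 ∧ ¬e12) := by
  by_cases h12 : e12 <;> by_cases h13 : e13 <;> by_cases h14 : e14 <;>
    by_cases h23 : e23 <;> by_cases h24 : e24 <;> by_cases h34 : e34 <;> simp_all

/-- If `X = {v1,v2,v3,v4}` with `d(v1) ≤ d(v2) ≤ d(v3) ≤ d(v4)` contains no balanceable
3-subset, then `G[X]` is an induced path on 4 vertices with endpoints `v1` and `v2`. -/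
theorem stmt_3 {V : Type*} [Fintype V] (G : SimpleGraph V) (v1 v2 v3 v4 : V)
    (hdist : [v1, v2, v3, v4].Pairwise (· ≠ ·))
    (h12 : deg G v1 ≤ deg G v2) (h23 : deg G v2 ≤ deg G v3) (h34 : deg G v3 ≤ deg G v4)
    (hnb : ∀ x y z : V, x ∈ ({v1, v2, v3, v4} : Set V) → y ∈ ({v1, v2, v3, v4} : Set V) →
      z ∈ ({v1, v2, v3, v4} : Set V) → x ≠ y → x ≠ z → y ≠ z →
      deg G x ≤ deg G y → deg G y ≤ deg G z → ¬ Balanceable G x y z) :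
    ∃ a b : V, ({a, b} : Set V) = {v3, v4} ∧
      G.Adj v1 a ∧ G.Adj a b ∧ G.Adj b v2 ∧
      ¬G.Adj v1 v2 ∧ ¬G.Adj v1 b ∧ ¬G.Adj a v2 := by
  simp only [List.pairwise_cons, List.mem_cons, List.mem_singleton, List.not_mem_nil,
    List.Pairwise.nil] at hdist
  obtain ⟨hd1, hd2, hd3, -⟩ := hdist
  have n12 : v1 ≠ v2 := hd1 v2 (by tauto)
  have n13 : v1 ≠ v3 := hd1 v3 (by tauto)
  have n14 : v1 ≠ v4 := hd1 v4 (by tauto)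
  have n23 : v2 ≠ v3 := hd2 v3 (by tauto)
  have n24 : v2 ≠ v4 := hd2 v4 (by tauto)
  have n34 : v3 ≠ v4 := hd3 v4 (by tauto)
  have m1 : v1 ∈ ({v1, v2, v3, v4} : Set V) := by simp
  have m2 : v2 ∈ ({v1, v2, v3, v4} : Set V) := by simp
  have m3 : v3 ∈ ({v1, v2, v3, v4} : Set V) := by simp
  have m4 : v4 ∈ ({v1, v2, v3, v4} : Set V) := by simp
  have h1 := hnb v1 v2 v3 m1 m2 m3 n12 n13 n23 h12 h23
  have h2 := hnb v1 v2 v4 m1 m2 m4 n12 n14 n24 h12 (h23.trans h34)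
  have h3 := hnb v1 v3 v4 m1 m3 m4 n13 n14 n34 (h12.trans h23) h34
  have h4 := hnb v2 v3 v4 m2 m3 m4 n23 n24 n34 h23 h34
  unfold Balanceable at h1 h2 h3 h4
  have key := path_key (G.Adj v1 v2) (G.Adj v1 v3) (G.Adj v1 v4) (G.Adj v2 v3)
    (G.Adj v2 v4) (G.Adj v3 v4) h1 h2 h3 h4
  rcases key with ⟨e13, e34, e24, ne14, ne23, ne12⟩ | ⟨e14, e34, e23, ne13, ne24, ne12⟩
  · exact ⟨v3, v4, rfl, e13, e34, e24.symm, ne12, ne14, fun h => ne23 h.symm⟩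
  · exact ⟨v4, v3, Set.pair_comm v4 v3, e14, e34.symm, e23.symm, ne12, ne13,
      fun h => ne24 h.symm⟩
end

section
/- Let G be a graph and U = {u1, u2, u3, u4, u5} ⊆ V(G) with d(u1) ≤ d(u2) ≤ d(u3) ≤ d(u4) ≤ d(u5). Then there exists a feasible 3-element subset S ⊆ U with u3 ∈ S. -/
private lemma bal_of_two {V : Type*} (G : SimpleGraph V) {x y z : V}
    (h1 : G.Adj x y) (h2 : G.Adj x z) : Balanceable G x y z := by
  unfold Balanceable; tauto

private lemma adj_top_of_not_bal {V : Type*} (G : SimpleGraph V) {x y z : V}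
    (h : ¬ Balanceable G x y z) : G.Adj x z ∨ G.Adj y z := by
  unfold Balanceable at h; tauto

private lemma adj_of_not_bal {V : Type*} (G : SimpleGraph V) {x y z : V}
    (hxy : G.Adj x y) (h : ¬ Balanceable G x y z) : G.Adj y z := by
  unfold Balanceable at h; tauto

/-- Among five vertices `u1, ..., u5` with `d(u1) ≤ ... ≤ d(u5)` there is a feasible
3-element subset containing `u3`. -/
theorem stmt_4 {V : Type*} [Fintype V] (G : SimpleGraph V) (u1 u2 u3 u4 u5 : V)
    (hdist : [u1, u2, u3, u4, u5].Pairwise (· ≠ ·))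
    (h12 : deg G u1 ≤ deg G u2) (h23 : deg G u2 ≤ deg G u3)
    (h34 : deg G u3 ≤ deg G u4) (h45 : deg G u4 ≤ deg G u5) :
    ∃ x y z : V, x ∈ ({u1, u2, u3, u4, u5} : Set V) ∧ y ∈ ({u1, u2, u3, u4, u5} : Set V) ∧
      z ∈ ({u1, u2, u3, u4, u5} : Set V) ∧ x ≠ y ∧ x ≠ z ∧ y ≠ z ∧
      u3 ∈ ({x, y, z} : Set V) ∧ deg G x ≤ deg G y ∧ deg G y ≤ deg G z ∧
      Feasible G x y z := by
  simp only [List.pairwise_cons, List.mem_cons, List.mem_singleton, List.not_mem_nil,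
    forall_eq_or_imp, forall_eq] at hdist
  obtain ⟨⟨n12, n13, n14, n15, -⟩, ⟨n23, n24, n25, -⟩, ⟨n34, n35, -⟩, ⟨n45, -⟩, -⟩ := hdist
  by_cases hb : Balanceable G u1 u2 u3
  · exact ⟨u1, u2, u3, by simp, by simp, by simp, n12, n13, n23, by simp, h12, h23,
      Or.inl hb⟩
  · have key : ∀ w, w ∈ ({u1, u2, u3, u4, u5} : Set V) → w ≠ u3 → w ≠ u4 → w ≠ u5 →
        deg G w ≤ deg G u3 → G.Adj w u3 →
        ∃ x y z : V, x ∈ ({u1, u2, u3, u4, u5} : Set V) ∧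
          y ∈ ({u1, u2, u3, u4, u5} : Set V) ∧
          z ∈ ({u1, u2, u3, u4, u5} : Set V) ∧ x ≠ y ∧ x ≠ z ∧ y ≠ z ∧
          u3 ∈ ({x, y, z} : Set V) ∧ deg G x ≤ deg G y ∧ deg G y ≤ deg G z ∧
          Feasible G x y z := by
      intro w hw hw3 hw4 hw5 hdw hadjw
      by_cases hb4 : Balanceable G w u3 u4
      · exact ⟨w, u3, u4, hw, by simp, by simp, hw3, hw4, n34, by simp, hdw, h34,
          Or.inl hb4⟩
      · have h34a : G.Adj u3 u4 := adj_of_not_bal G hadjw hb4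
        by_cases hb5 : Balanceable G w u3 u5
        · exact ⟨w, u3, u5, hw, by simp, by simp, hw3, hw5, n35, by simp, hdw,
            h34.trans h45, Or.inl hb5⟩
        · have h35a : G.Adj u3 u5 := adj_of_not_bal G hadjw hb5
          exact ⟨u3, u4, u5, by simp, by simp, by simp, n34, n35, n45, by simp, h34, h45,
            Or.inl (bal_of_two G h34a h35a)⟩
    rcases adj_top_of_not_bal G hb with h | h
    · exact key u1 (by simp) n13 n14 n15 (h12.trans h23) h
    · exact key u2 (by simp) n23 n24 n25 h23 h
end

section
/- Let G be a graph, d ≥ 1, and v1, v2, v3 distinct vertices with d(v1) = d(v2) = d and d(v3) = d + 2 such that {v1, v2, v3} is balanceable. If there exists a vertex v ∈ N(v3) \ (N[v1] ∪ N[v2]), then one can delete at most 3 vertices from G so that three vertices in the resulting induced subgraph share the same degree. -/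
open Finset SimpleGraph

lemma deg_eq_card' {V : Type*} [Fintype V] (G : SimpleGraph V) [DecidableRel G.Adj] (u : V) :
    deg G u = (G.neighborFinset u).card := by
  classical
  rw [deg, Nat.card_coe_set_eq, Set.ncard_eq_toFinset_card', SimpleGraph.neighborFinset_def]

lemma delDeg_eq_card' {V : Type*} [Fintype V] [DecidableEq V] (G : SimpleGraph V)
    [DecidableRel G.Adj] (D : Finset V) (u : V) :
    delDeg G D u = (G.neighborFinset u \ D).card := by
  classical
  rw [delDeg, Nat.card_coe_set_eq, Set.ncard_eq_toFinset_card']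
  congr 1
  ext a
  simp [SimpleGraph.neighborFinset_def]

lemma helper' {V : Type*} [Fintype V] [DecidableEq V] (G : SimpleGraph V)
    [DecidableRel G.Adj] (d : ℕ) (x y z v : V)
    (hxy : x ≠ y) (hxz : x ≠ z) (hyz : y ≠ z)
    (hx : (G.neighborFinset x).card = d) (hy : (G.neighborFinset y).card = d)
    (hz : (G.neighborFinset z).card = d + 2)
    (hvz : v ∈ G.neighborFinset z)
    (hvx : v ∉ G.neighborFinset x) (hvy : v ∉ G.neighborFinset y)
    (hvex : v ≠ x) (hvey : v ≠ y)
    (hTx : ((G.neighborFinset z \ {v, x, y}) ∩ G.neighborFinset x).card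
        < (G.neighborFinset z \ {v, x, y}).card)
    (hTy : ((G.neighborFinset z \ {v, x, y}) ∩ G.neighborFinset y).card
        < (G.neighborFinset z \ {v, x, y}).card) :
    ∃ D : Finset V, D.card ≤ 3 ∧ ∃ a b c : V, a ∉ D ∧ b ∉ D ∧ c ∉ D ∧
      a ≠ b ∧ a ≠ c ∧ b ≠ c ∧
      delDeg G D a = delDeg G D b ∧ delDeg G D b = delDeg G D c := by
  have hvz' : v ≠ z := ((mem_neighborFinset ..).1 hvz).ne'
  by_cases hA : ∃ w ∈ G.neighborFinset z \ {v, x, y},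
      w ∉ G.neighborFinset x ∧ w ∉ G.neighborFinset y
  · obtain ⟨w, hwT, hwx, hwy⟩ := hA
    have hwz : w ∈ G.neighborFinset z := (mem_sdiff.1 hwT).1
    have hw3 := (mem_sdiff.1 hwT).2
    simp only [mem_insert, mem_singleton, not_or] at hw3
    obtain ⟨hwv, hwx', hwy'⟩ := hw3
    have hwz' : w ≠ z := ((mem_neighborFinset ..).1 hwz).ne'
    have ex : G.neighborFinset x \ {v, w} = G.neighborFinset x := by
      ext a
      simp only [mem_sdiff, mem_insert, mem_singleton, not_or]
      refine ⟨fun h => h.1, fun h => ⟨h, ?_, ?_⟩⟩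
      · rintro rfl; exact hvx h
      · rintro rfl; exact hwx h
    have ey : G.neighborFinset y \ {v, w} = G.neighborFinset y := by
      ext a
      simp only [mem_sdiff, mem_insert, mem_singleton, not_or]
      refine ⟨fun h => h.1, fun h => ⟨h, ?_, ?_⟩⟩
      · rintro rfl; exact hvy h
      · rintro rfl; exact hwy h
    have hsub : ({v, w} : Finset V) ⊆ G.neighborFinset z := by
      intro a ha
      simp only [mem_insert, mem_singleton] at ha
      rcases ha with rfl | rfl
      · exact hvz
      · exact hwz
    have hcard2 : ({v, w} : Finset V).card = 2 := by
      rw [card_insert_of_notMem (by simp only [mem_singleton]; exact fun h => hwv h.symm), card_singleton]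
    have ez : (G.neighborFinset z \ {v, w}).card = d := by
      rw [card_sdiff_of_subset hsub, hz, hcard2]
      omega
    refine ⟨{v, w}, ?_, x, y, z, ?_, ?_, ?_, hxy, hxz, hyz, ?_, ?_⟩
    · calc ({v, w} : Finset V).card ≤ ({w} : Finset V).card + 1 := card_insert_le _ _
        _ ≤ 3 := by simp
    · simp only [mem_insert, mem_singleton, not_or]
      exact ⟨Ne.symm hvex, Ne.symm hwx'⟩
    · simp only [mem_insert, mem_singleton, not_or]
      exact ⟨Ne.symm hvey, Ne.symm hwy'⟩
    · simp only [mem_insert, mem_singleton, not_or]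
      exact ⟨Ne.symm hvz', Ne.symm hwz'⟩
    · rw [delDeg_eq_card', delDeg_eq_card', ex, ey, hx, hy]
    · rw [delDeg_eq_card', delDeg_eq_card', ey, hy, ez]
  · push_neg at hA
    -- every w in T is in N(x) ∪ N(y)
    have hAc : ∀ w ∈ G.neighborFinset z \ {v, x, y},
        w ∈ G.neighborFinset x ∨ w ∈ G.neighborFinset y := by
      intro w hw
      by_contra hcon
      push_neg at hcon
      exact hcon.2 (hA w hw hcon.1)
    have hb : ∃ b ∈ G.neighborFinset z \ {v, x, y}, b ∉ G.neighborFinset y := by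
      by_contra h
      push_neg at h
      rw [Finset.inter_eq_left.mpr h] at hTy
      exact lt_irrefl _ hTy
    have hc : ∃ c ∈ G.neighborFinset z \ {v, x, y}, c ∉ G.neighborFinset x := by
      by_contra h
      push_neg at h
      rw [Finset.inter_eq_left.mpr h] at hTx
      exact lt_irrefl _ hTx
    obtain ⟨b, hbT, hby⟩ := hb
    obtain ⟨c, hcT, hcx⟩ := hc
    have hbx : b ∈ G.neighborFinset x := (hAc b hbT).resolve_right hby
    have hcy : c ∈ G.neighborFinset y := (hAc c hcT).resolve_left hcx
    have hbz : b ∈ G.neighborFinset z := (mem_sdiff.1 hbT).1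
    have hcz : c ∈ G.neighborFinset z := (mem_sdiff.1 hcT).1
    have hb3 := (mem_sdiff.1 hbT).2
    have hc3 := (mem_sdiff.1 hcT).2
    simp only [mem_insert, mem_singleton, not_or] at hb3 hc3
    obtain ⟨hbv, hbx', hby'⟩ := hb3
    obtain ⟨hcv, hcx', hcy'⟩ := hc3
    have hbz' : b ≠ z := ((mem_neighborFinset ..).1 hbz).ne'
    have hcz' : c ≠ z := ((mem_neighborFinset ..).1 hcz).ne'
    have hbc : b ≠ c := fun h => hcx (h ▸ hbx)
    have ex : G.neighborFinset x \ {v, b, c} = G.neighborFinset x \ {b} := by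
      ext a
      simp only [mem_sdiff, mem_insert, mem_singleton, not_or]
      constructor
      · rintro ⟨h, _, h2, _⟩; exact ⟨h, h2⟩
      · rintro ⟨h, h2⟩
        refine ⟨h, ?_, h2, ?_⟩
        · rintro rfl; exact hvx h
        · rintro rfl; exact hcx h
    have ey : G.neighborFinset y \ {v, b, c} = G.neighborFinset y \ {c} := by
      ext a
      simp only [mem_sdiff, mem_insert, mem_singleton, not_or]
      constructor
      · rintro ⟨h, _, _, h2⟩; exact ⟨h, h2⟩
      · rintro ⟨h, h2⟩
        refine ⟨h, ?_, ?_, h2⟩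
        · rintro rfl; exact hvy h
        · rintro rfl; exact hby h
    have hsub : ({v, b, c} : Finset V) ⊆ G.neighborFinset z := by
      intro a ha
      simp only [mem_insert, mem_singleton] at ha
      rcases ha with rfl | rfl | rfl
      · exact hvz
      · exact hbz
      · exact hcz
    have hcard3 : ({v, b, c} : Finset V).card = 3 := by
      rw [card_insert_of_notMem (by simp only [mem_insert, mem_singleton, not_or]; exact ⟨fun h => hbv h.symm, fun h => hcv h.symm⟩),
        card_insert_of_notMem (by simp only [mem_singleton]; exact hbc), card_singleton]
    have hd1 : 1 ≤ d := by
      rw [← hx]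
      exact card_pos.mpr ⟨b, hbx⟩
    have ezc : (G.neighborFinset z \ {v, b, c}).card = d - 1 := by
      rw [card_sdiff_of_subset hsub, hz, hcard3]
      omega
    have exc : (G.neighborFinset x \ {b} : Finset V).card = d - 1 := by
      rw [card_sdiff_of_subset (singleton_subset_iff.mpr hbx), hx, card_singleton]
    have eyc : (G.neighborFinset y \ {c} : Finset V).card = d - 1 := by
      rw [card_sdiff_of_subset (singleton_subset_iff.mpr hcy), hy, card_singleton]
    refine ⟨{v, b, c}, ?_, x, y, z, ?_, ?_, ?_, hxy, hxz, hyz, ?_, ?_⟩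
    · calc ({v, b, c} : Finset V).card ≤ ({b, c} : Finset V).card + 1 := card_insert_le _ _
        _ ≤ (({c} : Finset V).card + 1) + 1 := by
            exact Nat.add_le_add_right (card_insert_le _ _) 1
        _ ≤ 3 := by simp
    · simp only [mem_insert, mem_singleton, not_or]
      exact ⟨Ne.symm hvex, Ne.symm hbx', Ne.symm hcx'⟩
    · simp only [mem_insert, mem_singleton, not_or]
      exact ⟨Ne.symm hvey, Ne.symm hby', Ne.symm hcy'⟩
    · simp only [mem_insert, mem_singleton, not_or]
      exact ⟨Ne.symm hvz', Ne.symm hbz', Ne.symm hcz'⟩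
    · rw [delDeg_eq_card', delDeg_eq_card', ex, ey, exc, eyc]
    · rw [delDeg_eq_card', delDeg_eq_card', ey, eyc, ezc]

/-- Claim 1 with the deletion lemma: if `{v1,v2,v3}` is balanceable with
`d(v1) = d(v2) = d ≥ 1`, `d(v3) = d + 2`, and some `v ∈ N(v3) \ (N[v1] ∪ N[v2])` exists,
then one can delete at most 3 vertices to make three vertices share the same degree. -/
theorem stmt_6 {V : Type*} [Fintype V] (G : SimpleGraph V) (d : ℕ) (hd : 1 ≤ d)
    (v1 v2 v3 : V) (h12 : v1 ≠ v2) (h13 : v1 ≠ v3) (h23 : v2 ≠ v3)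
    (hdeg1 : deg G v1 = d) (hdeg2 : deg G v2 = d) (hdeg3 : deg G v3 = d + 2)
    (hbal : Balanceable G v1 v2 v3)
    (hv : ∃ v : V, v ∈ G.neighborSet v3 \
      (insert v1 (G.neighborSet v1) ∪ insert v2 (G.neighborSet v2))) :
    ∃ D : Finset V, D.card ≤ 3 ∧ ∃ x y z : V, x ∉ D ∧ y ∉ D ∧ z ∉ D ∧
      x ≠ y ∧ x ≠ z ∧ y ≠ z ∧
      delDeg G D x = delDeg G D y ∧ delDeg G D y = delDeg G D z := by
  classical
  obtain ⟨v, hvmem⟩ := hv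
  rw [Set.mem_diff, Set.mem_union] at hvmem
  obtain ⟨hvz, hvn⟩ := hvmem
  push_neg at hvn
  obtain ⟨hn1, hn2⟩ := hvn
  simp only [Set.mem_insert_iff, SimpleGraph.mem_neighborSet, not_or] at hn1 hn2
  rw [SimpleGraph.mem_neighborSet] at hvz
  rw [deg_eq_card'] at hdeg1 hdeg2 hdeg3
  have hvzF : v ∈ G.neighborFinset v3 := (mem_neighborFinset ..).2 hvz
  have hvxF : v ∉ G.neighborFinset v1 := fun h => hn1.2 ((mem_neighborFinset ..).1 h)
  have hvyF : v ∉ G.neighborFinset v2 := fun h => hn2.2 ((mem_neighborFinset ..).1 h)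
  -- common proof for the cases where v3 is adjacent to neither v1 nor v2
  have common : ¬G.Adj v1 v3 → ¬G.Adj v2 v3 →
      ((G.neighborFinset v3 \ {v, v1, v2}) ∩ G.neighborFinset v1).card
        < (G.neighborFinset v3 \ {v, v1, v2}).card ∧
      ((G.neighborFinset v3 \ {v, v1, v2}) ∩ G.neighborFinset v2).card
        < (G.neighborFinset v3 \ {v, v1, v2}).card := by
    intro h13' h23'
    have hTeq : G.neighborFinset v3 \ {v, v1, v2} = G.neighborFinset v3 \ {v} := by
      ext a
      simp only [mem_sdiff, mem_insert, mem_singleton, not_or, mem_neighborFinset]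
      constructor
      · rintro ⟨h, h1, _, _⟩; exact ⟨h, h1⟩
      · rintro ⟨h, h1⟩
        refine ⟨h, h1, ?_, ?_⟩
        · rintro rfl; exact h13' h.symm
        · rintro rfl; exact h23' h.symm
    have hTc : (G.neighborFinset v3 \ {v, v1, v2}).card = d + 1 := by
      rw [hTeq, card_sdiff_of_subset (singleton_subset_iff.mpr hvzF), hdeg3, card_singleton]
      omega
    constructor
    · refine lt_of_le_of_lt (le_trans (card_le_card inter_subset_right) hdeg1.le) ?_
      rw [hTc]; omega
    · refine lt_of_le_of_lt (le_trans (card_le_card inter_subset_right) hdeg2.le) ?_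
      rw [hTc]; omega
  rcases hbal with ⟨hA12, hA13, hA23⟩ | ⟨hA12, hA13, hA23⟩ | ⟨hA12, hA13, hA23⟩ |
      ⟨hA12, hA13, hA23⟩
  · obtain ⟨hTx, hTy⟩ := common hA13 hA23
    exact helper' G d v1 v2 v3 v h12 h13 h23 hdeg1 hdeg2 hdeg3 hvzF hvxF hvyF hn1.1 hn2.1 hTx hTy
  · -- clique case
    have h1z : v1 ∈ G.neighborFinset v3 := (mem_neighborFinset ..).2 hA13.symm
    have h2z : v2 ∈ G.neighborFinset v3 := (mem_neighborFinset ..).2 hA23.symm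
    have hsub3 : ({v, v1, v2} : Finset V) ⊆ G.neighborFinset v3 := by
      intro a ha
      simp only [mem_insert, mem_singleton] at ha
      rcases ha with rfl | rfl | rfl
      exacts [hvzF, h1z, h2z]
    have hcard3 : ({v, v1, v2} : Finset V).card = 3 := by
      rw [card_insert_of_notMem (by
            simp only [mem_insert, mem_singleton, not_or]
            exact ⟨hn1.1, hn2.1⟩),
        card_insert_of_notMem (by simp only [mem_singleton]; exact h12), card_singleton]
    have hTc : (G.neighborFinset v3 \ {v, v1, v2}).card = d - 1 := by
      rw [card_sdiff_of_subset hsub3, hdeg3, hcard3]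
      omega
    have hd2 : 2 ≤ d := by
      rw [← hdeg1]
      refine le_trans ?_ (card_le_card (show ({v2, v3} : Finset V) ⊆ G.neighborFinset v1 by
        intro a ha
        simp only [mem_insert, mem_singleton] at ha
        rcases ha with rfl | rfl
        exacts [(mem_neighborFinset ..).2 hA12, (mem_neighborFinset ..).2 hA13]))
      rw [card_insert_of_notMem (by simp only [mem_singleton]; exact h23), card_singleton]
    have hb1 : (G.neighborFinset v1 \ ({v2, v3} : Finset V)).card = d - 2 := by
      rw [card_sdiff_of_subset (by
        intro a ha
        simp only [mem_insert, mem_singleton] at ha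
        rcases ha with rfl | rfl
        exacts [(mem_neighborFinset ..).2 hA12, (mem_neighborFinset ..).2 hA13]), hdeg1,
        card_insert_of_notMem (by simp only [mem_singleton]; exact h23), card_singleton]
    have hb2 : (G.neighborFinset v2 \ ({v1, v3} : Finset V)).card = d - 2 := by
      rw [card_sdiff_of_subset (by
        intro a ha
        simp only [mem_insert, mem_singleton] at ha
        rcases ha with rfl | rfl
        exacts [(mem_neighborFinset ..).2 hA12.symm, (mem_neighborFinset ..).2 hA23]), hdeg2,
        card_insert_of_notMem (by simp only [mem_singleton]; exact h13), card_singleton]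
    have hTx : ((G.neighborFinset v3 \ {v, v1, v2}) ∩ G.neighborFinset v1).card
        < (G.neighborFinset v3 \ {v, v1, v2}).card := by
      have hss : (G.neighborFinset v3 \ {v, v1, v2}) ∩ G.neighborFinset v1
          ⊆ G.neighborFinset v1 \ ({v2, v3} : Finset V) := by
        intro a ha
        rw [mem_inter, mem_sdiff] at ha
        obtain ⟨⟨haz, hane⟩, han1⟩ := ha
        simp only [mem_insert, mem_singleton, not_or] at hane
        rw [mem_sdiff]
        refine ⟨han1, ?_⟩
        simp only [mem_insert, mem_singleton, not_or]
        exact ⟨hane.2.2, fun h => G.irrefl (h ▸ (mem_neighborFinset ..).1 haz)⟩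
      refine lt_of_le_of_lt (le_trans (card_le_card hss) hb1.le) ?_
      rw [hTc]; omega
    have hTy : ((G.neighborFinset v3 \ {v, v1, v2}) ∩ G.neighborFinset v2).card
        < (G.neighborFinset v3 \ {v, v1, v2}).card := by
      have hss : (G.neighborFinset v3 \ {v, v1, v2}) ∩ G.neighborFinset v2
          ⊆ G.neighborFinset v2 \ ({v1, v3} : Finset V) := by
        intro a ha
        rw [mem_inter, mem_sdiff] at ha
        obtain ⟨⟨haz, hane⟩, han2⟩ := ha
        simp only [mem_insert, mem_singleton, not_or] at hane
        rw [mem_sdiff]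
        refine ⟨han2, ?_⟩
        simp only [mem_insert, mem_singleton, not_or]
        exact ⟨hane.2.1, fun h => G.irrefl (h ▸ (mem_neighborFinset ..).1 haz)⟩
      refine lt_of_le_of_lt (le_trans (card_le_card hss) hb2.le) ?_
      rw [hTc]; omega
    exact helper' G d v1 v2 v3 v h12 h13 h23 hdeg1 hdeg2 hdeg3 hvzF hvxF hvyF hn1.1 hn2.1 hTx hTy
  · obtain ⟨hTx, hTy⟩ := common hA13 hA23
    exact helper' G d v1 v2 v3 v h12 h13 h23 hdeg1 hdeg2 hdeg3 hvzF hvxF hvyF hn1.1 hn2.1 hTx hTy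
  · -- edges v1v2 and v1v3 only
    have h1z : v1 ∈ G.neighborFinset v3 := (mem_neighborFinset ..).2 hA13.symm
    have hTeq : G.neighborFinset v3 \ {v, v1, v2} = G.neighborFinset v3 \ {v, v1} := by
      ext a
      simp only [mem_sdiff, mem_insert, mem_singleton, not_or, mem_neighborFinset]
      constructor
      · rintro ⟨h, h1, h2, _⟩; exact ⟨h, h1, h2⟩
      · rintro ⟨h, h1, h2⟩
        refine ⟨h, h1, h2, ?_⟩
        rintro rfl; exact hA23 h.symm
    have hTc : (G.neighborFinset v3 \ {v, v1, v2}).card = d := by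
      rw [hTeq, card_sdiff_of_subset (by
          intro a ha
          simp only [mem_insert, mem_singleton] at ha
          rcases ha with rfl | rfl
          exacts [hvzF, h1z]), hdeg3,
        card_insert_of_notMem (by simp only [mem_singleton]; exact hn1.1), card_singleton]
      omega
    have hd2 : 2 ≤ d := by
      rw [← hdeg1]
      refine le_trans ?_ (card_le_card (show ({v2, v3} : Finset V) ⊆ G.neighborFinset v1 by
        intro a ha
        simp only [mem_insert, mem_singleton] at ha
        rcases ha with rfl | rfl
        exacts [(mem_neighborFinset ..).2 hA12, (mem_neighborFinset ..).2 hA13]))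
      rw [card_insert_of_notMem (by simp only [mem_singleton]; exact h23), card_singleton]
    have hb1 : (G.neighborFinset v1 \ ({v2, v3} : Finset V)).card = d - 2 := by
      rw [card_sdiff_of_subset (by
        intro a ha
        simp only [mem_insert, mem_singleton] at ha
        rcases ha with rfl | rfl
        exacts [(mem_neighborFinset ..).2 hA12, (mem_neighborFinset ..).2 hA13]), hdeg1,
        card_insert_of_notMem (by simp only [mem_singleton]; exact h23), card_singleton]
    have hb2 : (G.neighborFinset v2 \ ({v1} : Finset V)).card = d - 1 := by
      rw [card_sdiff_of_subset (singleton_subset_iff.mpr ((mem_neighborFinset ..).2 hA12.symm)), hdeg2,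
        card_singleton]
    have hTx : ((G.neighborFinset v3 \ {v, v1, v2}) ∩ G.neighborFinset v1).card
        < (G.neighborFinset v3 \ {v, v1, v2}).card := by
      have hss : (G.neighborFinset v3 \ {v, v1, v2}) ∩ G.neighborFinset v1
          ⊆ G.neighborFinset v1 \ ({v2, v3} : Finset V) := by
        intro a ha
        rw [mem_inter, mem_sdiff] at ha
        obtain ⟨⟨haz, hane⟩, han1⟩ := ha
        simp only [mem_insert, mem_singleton, not_or] at hane
        rw [mem_sdiff]
        refine ⟨han1, ?_⟩
        simp only [mem_insert, mem_singleton, not_or]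
        exact ⟨hane.2.2, fun h => G.irrefl (h ▸ (mem_neighborFinset ..).1 haz)⟩
      refine lt_of_le_of_lt (le_trans (card_le_card hss) hb1.le) ?_
      rw [hTc]; omega
    have hTy : ((G.neighborFinset v3 \ {v, v1, v2}) ∩ G.neighborFinset v2).card
        < (G.neighborFinset v3 \ {v, v1, v2}).card := by
      have hss : (G.neighborFinset v3 \ {v, v1, v2}) ∩ G.neighborFinset v2
          ⊆ G.neighborFinset v2 \ ({v1} : Finset V) := by
        intro a ha
        rw [mem_inter, mem_sdiff] at ha
        obtain ⟨⟨haz, hane⟩, han2⟩ := ha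
        simp only [mem_insert, mem_singleton, not_or] at hane
        rw [mem_sdiff, mem_singleton]
        exact ⟨han2, hane.2.1⟩
      refine lt_of_le_of_lt (le_trans (card_le_card hss) hb2.le) ?_
      rw [hTc]; omega
    exact helper' G d v1 v2 v3 v h12 h13 h23 hdeg1 hdeg2 hdeg3 hvzF hvxF hvyF hn1.1 hn2.1 hTx hTy
end

section
/- Let G be a graph with distinct vertices v1, v2, v3, v4. Suppose N(v3) ∪ N(v4) ⊆ N[v1] ∪ N[v2], d(v3) + d(v4) − d(v1) − d(v2) = 4, and it is not the case that (v1v2 ∉ E(G) and v3v4 ∈ E(G)). Let U = {v1,v2,v3,v4} and W = ((N(v1)\N(v2)) ∪ (N(v2)\N(v1))) \ U. Then e({v3,v4}, W) − |W| ≥ 4, where e(A,B) counts edges with one end in A and one end in B. -/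
open Finset in
private lemma sum_union_le' {V : Type*} [DecidableEq V] (f : V → ℕ) (s t : Finset V) :
    ∑ u ∈ s ∪ t, f u ≤ ∑ u ∈ s, f u + ∑ u ∈ t, f u := by
  rw [← Finset.union_sdiff_self_eq_union, Finset.sum_union Finset.disjoint_sdiff]
  exact add_le_add_right (Finset.sum_le_sum_of_subset (Finset.sdiff_subset)) _


private lemma ite_count_aux (p q r s : Prop) [Decidable p] [Decidable q] [Decidable r]
    [Decidable s] :
    ((if p then 1 else 0) + (if r then 1 else 0)) +
      ((if q then 1 else 0) + (if s then 1 else 0)) =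
    2 * ((if p ∧ q then 1 else 0) + (if r ∧ s then 1 else 0)) +
      ((if p ∧ ¬q ∨ q ∧ ¬p then (1:ℕ) else 0) + (if r ∧ ¬s ∨ s ∧ ¬r then 1 else 0)) := by
  by_cases hp : p <;> by_cases hq : q <;> by_cases hr : r <;> by_cases hs : s <;>
    simp [hp, hq, hr, hs]


set_option maxHeartbeats 1000000 in
/-- The key counting inequality (3): under the covering and degree hypotheses,
`e({v3,v4}, W) ≥ |W| + 4` for `W = (N(v1) Δ N(v2)) \ {v1,v2,v3,v4}`. -/
theorem stmt_7 {V : Type*} [Fintype V] (G : SimpleGraph V) (v1 v2 v3 v4 : V)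
    (hdist : [v1, v2, v3, v4].Pairwise (· ≠ ·))
    (hcov : G.neighborSet v3 ∪ G.neighborSet v4 ⊆
      insert v1 (G.neighborSet v1) ∪ insert v2 (G.neighborSet v2))
    (hdeg : deg G v3 + deg G v4 = deg G v1 + deg G v2 + 4)
    (hne : ¬(¬G.Adj v1 v2 ∧ G.Adj v3 v4)) :
    Nat.card ↥(((G.neighborSet v1 \ G.neighborSet v2) ∪
        (G.neighborSet v2 \ G.neighborSet v1)) \ ({v1, v2, v3, v4} : Set V)) + 4 ≤
      Nat.card {p : V × V // p.1 ∈ ({v3, v4} : Set V) ∧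
        p.2 ∈ ((G.neighborSet v1 \ G.neighborSet v2) ∪
          (G.neighborSet v2 \ G.neighborSet v1)) \ ({v1, v2, v3, v4} : Set V) ∧
        G.Adj p.1 p.2} := by

  classical
  obtain ⟨⟨n12, n13, n14⟩, ⟨n23, n24⟩, n34⟩ :
      (v1 ≠ v2 ∧ v1 ≠ v3 ∧ v1 ≠ v4) ∧ (v2 ≠ v3 ∧ v2 ≠ v4) ∧ v3 ≠ v4 := by
    simpa using hdist
  set f : V → ℕ := fun u => (if G.Adj v3 u then 1 else 0) + (if G.Adj v4 u then 1 else 0)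
    with hf
  set N1 := G.neighborFinset v1 with hN1
  set N2 := G.neighborFinset v2 with hN2
  set A := N1 ∩ N2 with hA
  set B := (N1 \ N2) ∪ (N2 \ N1) with hB
  set P : Finset V := {v3, v4} with hP
  set UF : Finset V := {v1, v2} ∪ P with hU
  set WF := B \ UF with hW
  set D' := N1 ∪ N2 ∪ {v1, v2} with hD
  -- membership/coboundary basic facts
  have hdAB : Disjoint A B := by
    rw [Finset.disjoint_left]
    intro x hx hxB
    rw [hA, Finset.mem_inter] at hx
    rw [hB, Finset.mem_union, Finset.mem_sdiff, Finset.mem_sdiff] at hxB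
    rcases hxB with h | h
    · exact h.2 hx.2
    · exact h.2 hx.1
  -- degrees
  have hdeg' : G.degree v3 + G.degree v4 = G.degree v1 + G.degree v2 + 4 := by
    have e : ∀ v, deg G v = G.degree v := fun v => by
      rw [deg, Nat.card_eq_fintype_card, SimpleGraph.card_neighborSet_eq_degree]
    rw [← e, ← e, ← e, ← e]; exact hdeg
  have h4 : G.degree v1 + G.degree v2 = 2 * A.card + B.card := by
    have hu : A ∪ B = N1 ∪ N2 := by
      rw [hA, hB, ← Finset.union_assoc, Finset.union_comm (N1 ∩ N2) (N1 \ N2),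
        Finset.sdiff_union_inter, Finset.union_sdiff_self_eq_union]
    have h1 : (N1 ∪ N2).card + (N1 ∩ N2).card = N1.card + N2.card :=
      Finset.card_union_add_card_inter _ _
    have h2 : (A ∪ B).card = A.card + B.card := Finset.card_union_of_disjoint hdAB
    rw [← hu, ← hA] at h1
    rw [h2] at h1
    have e1 : G.degree v1 = N1.card := rfl
    have e2 : G.degree v2 = N2.card := rfl
    omega
  -- total sum of f
  have htot : ∑ u ∈ Finset.univ, f u = G.degree v3 + G.degree v4 := by
    have hs : ∀ w : V, (Finset.univ.filter (G.Adj w)).card = G.degree w := by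
      intro w
      congr 1
      ext x
      simp [SimpleGraph.mem_neighborFinset]
    rw [hf]
    rw [Finset.sum_add_distrib, ← Finset.card_filter, ← Finset.card_filter, hs, hs]
  -- support of f
  have hsupp : ∑ u ∈ D', f u = ∑ u ∈ Finset.univ, f u := by
    apply Finset.sum_subset (Finset.subset_univ _)
    intro x _ hx
    by_contra hfx
    have hx34 : G.Adj v3 x ∨ G.Adj v4 x := by
      by_contra hc
      push_neg at hc
      simp [hf, hc.1, hc.2] at hfx
    have hmem : x ∈ G.neighborSet v3 ∪ G.neighborSet v4 := by
      simpa [SimpleGraph.mem_neighborSet] using hx34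
    have hx' := hcov hmem
    rw [Set.mem_union, Set.mem_insert_iff, Set.mem_insert_iff,
      SimpleGraph.mem_neighborSet, SimpleGraph.mem_neighborSet] at hx'
    apply hx
    rw [hD, Finset.mem_union, Finset.mem_union]
    rcases hx' with (rfl | h) | (rfl | h)
    · right; exact Finset.mem_insert_self _ _
    · left; left; rw [hN1, SimpleGraph.mem_neighborFinset]; exact h
    · right; rw [Finset.mem_insert, Finset.mem_singleton]; right; rfl
    · left; right; rw [hN2, SimpleGraph.mem_neighborFinset]; exact h
  -- decomposition of the support
  have hWD : WF ⊆ D' := by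
    intro x hx
    rw [hW, Finset.mem_sdiff] at hx
    rw [hD, Finset.mem_union]
    left
    rw [hB, Finset.mem_union, Finset.mem_sdiff, Finset.mem_sdiff] at hx
    rw [Finset.mem_union]
    rcases hx.1 with h | h
    · exact Or.inl h.1
    · exact Or.inr h.1
  have h5 : ∑ u ∈ D' \ WF, f u + ∑ u ∈ WF, f u = ∑ u ∈ D', f u := Finset.sum_sdiff hWD
  have h6 : ∑ u ∈ D' \ WF, f u ≤ ∑ u ∈ A ∪ (B ∩ P) ∪ {v1, v2}, f u := by
    apply Finset.sum_le_sum_of_subset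
    intro x hx
    rw [Finset.mem_sdiff] at hx
    obtain ⟨hxD, hxW⟩ := hx
    rw [Finset.mem_union, Finset.mem_union]
    by_cases he : x = v1 ∨ x = v2
    · right
      rw [Finset.mem_insert, Finset.mem_singleton]
      exact he
    · left
      have hxN : x ∈ N1 ∪ N2 := by
        rw [hD, Finset.mem_union] at hxD
        rcases hxD with h | h
        · exact h
        · exfalso
          apply he
          rwa [Finset.mem_insert, Finset.mem_singleton] at h
      rw [Finset.mem_union] at hxN
      have hBP : x ∈ B → x ∈ B ∩ P := by
        intro hxB
        have hxU : x ∈ UF := by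
          by_contra hu
          exact hxW (by rw [hW, Finset.mem_sdiff]; exact ⟨hxB, hu⟩)
        rw [Finset.mem_inter]
        refine ⟨hxB, ?_⟩
        rw [hU, Finset.mem_union, Finset.mem_insert, Finset.mem_singleton] at hxU
        rcases hxU with h | h
        · exact absurd h he
        · exact h
      by_cases hA1 : x ∈ N1 <;> by_cases hA2 : x ∈ N2
      · left; rw [hA, Finset.mem_inter]; exact ⟨hA1, hA2⟩
      · right
        apply hBP
        rw [hB, Finset.mem_union]
        left
        rw [Finset.mem_sdiff]
        exact ⟨hA1, hA2⟩
      · right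
        apply hBP
        rw [hB, Finset.mem_union]
        right
        rw [Finset.mem_sdiff]
        exact ⟨hA2, hA1⟩
      · rcases hxN with h | h
        · exact absurd h hA1
        · exact absurd h hA2
  have h7 : ∑ u ∈ A ∪ (B ∩ P) ∪ {v1, v2}, f u ≤
      (∑ u ∈ A, f u + ∑ u ∈ B ∩ P, f u) + (f v1 + f v2) := by
    calc ∑ u ∈ A ∪ (B ∩ P) ∪ {v1, v2}, f u
        ≤ ∑ u ∈ A ∪ (B ∩ P), f u + ∑ u ∈ ({v1, v2} : Finset V), f u := sum_union_le' f _ _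
      _ ≤ (∑ u ∈ A, f u + ∑ u ∈ B ∩ P, f u) + ∑ u ∈ ({v1, v2} : Finset V), f u :=
          add_le_add_left (sum_union_le' f _ _) _
      _ = (∑ u ∈ A, f u + ∑ u ∈ B ∩ P, f u) + (f v1 + f v2) := by
          rw [Finset.sum_pair n12]
  -- splitting A
  have hAsplit : ∑ u ∈ A \ P, f u + ∑ u ∈ A ∩ P, f u = ∑ u ∈ A, f u := by
    rw [← Finset.sdiff_inter_self_left A P]
    exact Finset.sum_sdiff (Finset.inter_subset_left)
  have hAle : ∑ u ∈ A \ P, f u ≤ 2 * (A \ P).card := by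
    calc ∑ u ∈ A \ P, f u ≤ ∑ _u ∈ A \ P, 2 := by
          apply Finset.sum_le_sum
          intro i _
          simp only [hf]
          split_ifs <;> omega
      _ = 2 * (A \ P).card := by rw [Finset.sum_const, smul_eq_mul]; ring
  have hacard : (A ∩ P).card + (A \ P).card = A.card := Finset.card_inter_add_card_sdiff _ _
  have hbcard : (B ∩ UF).card + WF.card = B.card := Finset.card_inter_add_card_sdiff _ _
  -- values of f on P
  have hfP : ∀ u ∈ P, f u = (if G.Adj v3 v4 then 1 else 0) := by
    intro u hu
    rw [hP, Finset.mem_insert, Finset.mem_singleton] at hu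
    rcases hu with rfl | rfl
    · simp [hf, G.adj_comm v4 u]
    · simp [hf]
  have hsAP : ∑ u ∈ A ∩ P, f u = (A ∩ P).card * (if G.Adj v3 v4 then 1 else 0) := by
    rw [Finset.sum_congr rfl (fun u hu => hfP u (Finset.mem_of_mem_inter_right hu)),
      Finset.sum_const, smul_eq_mul]
  have hsBP : ∑ u ∈ B ∩ P, f u = (B ∩ P).card * (if G.Adj v3 v4 then 1 else 0) := by
    rw [Finset.sum_congr rfl (fun u hu => hfP u (Finset.mem_of_mem_inter_right hu)),
      Finset.sum_const, smul_eq_mul]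
  -- f v1 + f v2 in terms of the cards of A ∩ P and B ∩ P
  have hAPcard : (A ∩ P).card = (if v3 ∈ A then 1 else 0) + (if v4 ∈ A then 1 else 0) := by
    rw [Finset.inter_comm, ← Finset.filter_mem_eq_inter, Finset.card_filter, hP,
      Finset.sum_pair n34]
  have hBPcard : (B ∩ P).card = (if v3 ∈ B then 1 else 0) + (if v4 ∈ B then 1 else 0) := by
    rw [Finset.inter_comm, ← Finset.filter_mem_eq_inter, Finset.card_filter, hP,
      Finset.sum_pair n34]
  have m3A : v3 ∈ A ↔ (G.Adj v1 v3 ∧ G.Adj v2 v3) := by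
    rw [hA, Finset.mem_inter, hN1, hN2, SimpleGraph.mem_neighborFinset,
      SimpleGraph.mem_neighborFinset]
  have m4A : v4 ∈ A ↔ (G.Adj v1 v4 ∧ G.Adj v2 v4) := by
    rw [hA, Finset.mem_inter, hN1, hN2, SimpleGraph.mem_neighborFinset,
      SimpleGraph.mem_neighborFinset]
  have m3B : v3 ∈ B ↔ ((G.Adj v1 v3 ∧ ¬ G.Adj v2 v3) ∨ (G.Adj v2 v3 ∧ ¬ G.Adj v1 v3)) := by
    rw [hB, Finset.mem_union, Finset.mem_sdiff, Finset.mem_sdiff, hN1, hN2,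
      SimpleGraph.mem_neighborFinset, SimpleGraph.mem_neighborFinset]
  have m4B : v4 ∈ B ↔ ((G.Adj v1 v4 ∧ ¬ G.Adj v2 v4) ∨ (G.Adj v2 v4 ∧ ¬ G.Adj v1 v4)) := by
    rw [hB, Finset.mem_union, Finset.mem_sdiff, Finset.mem_sdiff, hN1, hN2,
      SimpleGraph.mem_neighborFinset, SimpleGraph.mem_neighborFinset]
  have hf1 : f v1 = (if G.Adj v1 v3 then 1 else 0) + (if G.Adj v1 v4 then 1 else 0) := by
    simp only [hf]
    rw [G.adj_comm v3 v1, G.adj_comm v4 v1]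
  have hf2 : f v2 = (if G.Adj v2 v3 then 1 else 0) + (if G.Adj v2 v4 then 1 else 0) := by
    simp only [hf]
    rw [G.adj_comm v3 v2, G.adj_comm v4 v2]
  have h11 : f v1 + f v2 = 2 * (A ∩ P).card + (B ∩ P).card := by
    rw [hf1, hf2, hAPcard, hBPcard]
    simp only [m3A, m4A, m3B, m4B]
    exact ite_count_aux (G.Adj v1 v3) (G.Adj v2 v3) (G.Adj v1 v4) (G.Adj v2 v4)
  have h12ab : (A ∩ P).card + (B ∩ P).card ≤ 2 := by
    have hdisj : Disjoint (A ∩ P) (B ∩ P) :=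
      hdAB.mono Finset.inter_subset_left Finset.inter_subset_left
    calc (A ∩ P).card + (B ∩ P).card = ((A ∩ P) ∪ (B ∩ P)).card :=
          (Finset.card_union_of_disjoint hdisj).symm
      _ ≤ P.card := Finset.card_le_card (by
          intro x hx
          rw [Finset.mem_union] at hx
          rcases hx with h | h <;> exact (Finset.mem_inter.mp h).2)
      _ ≤ 2 := le_trans (Finset.card_insert_le _ _) (by simp)
  -- the card of B ∩ UF
  have hBUsplit : B ∩ UF = (B ∩ {v1, v2}) ∪ (B ∩ P) := by
    rw [hU, Finset.inter_union_distrib_left]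
  have hdisj12P : Disjoint (B ∩ ({v1, v2} : Finset V)) (B ∩ P) := by
    rw [Finset.disjoint_left]
    intro x hx hx'
    rw [Finset.mem_inter, hP, Finset.mem_insert, Finset.mem_singleton] at hx'
    rw [Finset.mem_inter, Finset.mem_insert, Finset.mem_singleton] at hx
    rcases hx.2 with rfl | rfl <;> rcases hx'.2 with h | h
    · exact n13 h
    · exact n14 h
    · exact n23 h
    · exact n24 h
  have hBU : (B ∩ UF).card = (B ∩ ({v1, v2} : Finset V)).card + (B ∩ P).card := by
    rw [hBUsplit, Finset.card_union_of_disjoint hdisj12P]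
  have m1B : v1 ∈ B ↔ G.Adj v1 v2 := by
    rw [hB, Finset.mem_union, Finset.mem_sdiff, Finset.mem_sdiff, hN1, hN2,
      SimpleGraph.mem_neighborFinset, SimpleGraph.mem_neighborFinset]
    constructor
    · intro h
      rcases h with ⟨h, _⟩ | ⟨h, _⟩
      · exact absurd h (G.irrefl)
      · exact h.symm
    · intro h
      exact Or.inr ⟨h.symm, G.irrefl⟩
  have m2B : v2 ∈ B ↔ G.Adj v1 v2 := by
    rw [hB, Finset.mem_union, Finset.mem_sdiff, Finset.mem_sdiff, hN1, hN2,
      SimpleGraph.mem_neighborFinset, SimpleGraph.mem_neighborFinset]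
    constructor
    · intro h
      rcases h with ⟨h, _⟩ | ⟨h, _⟩
      · exact h
      · exact absurd h (G.irrefl)
    · intro h
      exact Or.inl ⟨h, G.irrefl⟩
  have hB12 : (B ∩ ({v1, v2} : Finset V)).card = (if G.Adj v1 v2 then 2 else 0) := by
    by_cases a12 : G.Adj v1 v2
    · have heq : B ∩ ({v1, v2} : Finset V) = {v1, v2} := by
        apply Finset.inter_eq_right.mpr
        intro x hx
        rw [Finset.mem_insert, Finset.mem_singleton] at hx
        rcases hx with rfl | rfl
        · exact m1B.mpr a12
        · exact m2B.mpr a12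
      rw [heq, if_pos a12, Finset.card_pair n12]
    · have heq : B ∩ ({v1, v2} : Finset V) = ∅ := by
        rw [Finset.eq_empty_iff_forall_notMem]
        intro x hx
        rw [Finset.mem_inter, Finset.mem_insert, Finset.mem_singleton] at hx
        rcases hx.2 with rfl | rfl
        · exact a12 (m1B.mp hx.1)
        · exact a12 (m2B.mp hx.1)
      rw [heq, if_neg a12, Finset.card_empty]
  -- coercion identities and rewriting the goal
  have hNcoe1 : (N1 : Set V) = G.neighborSet v1 := by
    rw [hN1, SimpleGraph.neighborFinset_def, Set.coe_toFinset]
  have hNcoe2 : (N2 : Set V) = G.neighborSet v2 := by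
    rw [hN2, SimpleGraph.neighborFinset_def, Set.coe_toFinset]
  have hUcoe : (UF : Set V) = ({v1, v2, v3, v4} : Set V) := by
    rw [hU, hP, Finset.coe_union, Finset.coe_insert, Finset.coe_singleton,
      Finset.coe_insert, Finset.coe_singleton, Set.insert_union, Set.singleton_union]
  have hWcoe : (WF : Set V) = ((G.neighborSet v1 \ G.neighborSet v2) ∪
      (G.neighborSet v2 \ G.neighborSet v1)) \ ({v1, v2, v3, v4} : Set V) := by
    rw [hW, Finset.coe_sdiff, hB, Finset.coe_union, Finset.coe_sdiff, Finset.coe_sdiff,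
      hNcoe1, hNcoe2, hUcoe]
  have hPcoe : (P : Set V) = ({v3, v4} : Set V) := by
    rw [hP, Finset.coe_insert, Finset.coe_singleton]
  have goal1 : Nat.card ↥(((G.neighborSet v1 \ G.neighborSet v2) ∪
      (G.neighborSet v2 \ G.neighborSet v1)) \ ({v1, v2, v3, v4} : Set V)) = WF.card := by
    rw [← hWcoe, Nat.card_coe_set_eq, Set.ncard_coe_finset]
  have goal2 : Nat.card {p : V × V // p.1 ∈ ({v3, v4} : Set V) ∧
      p.2 ∈ ((G.neighborSet v1 \ G.neighborSet v2) ∪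
        (G.neighborSet v2 \ G.neighborSet v1)) \ ({v1, v2, v3, v4} : Set V) ∧
      G.Adj p.1 p.2} = ∑ w ∈ WF, f w := by
    have hseq : {p : V × V | p.1 ∈ ({v3, v4} : Set V) ∧
        p.2 ∈ ((G.neighborSet v1 \ G.neighborSet v2) ∪
          (G.neighborSet v2 \ G.neighborSet v1)) \ ({v1, v2, v3, v4} : Set V) ∧
        G.Adj p.1 p.2} = ↑((P ×ˢ WF).filter (fun p => G.Adj p.1 p.2)) := by
      ext ⟨x, y⟩
      constructor
      · rintro ⟨hx, hy, ha⟩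
        rw [← hPcoe] at hx
        rw [← hWcoe] at hy
        exact Finset.mem_coe.mpr (Finset.mem_filter.mpr
          ⟨Finset.mem_product.mpr ⟨Finset.mem_coe.mp hx, Finset.mem_coe.mp hy⟩, ha⟩)
      · intro h
        have h' := Finset.mem_filter.mp (Finset.mem_coe.mp h)
        have hp := Finset.mem_product.mp h'.1
        refine ⟨?_, ?_, h'.2⟩
        · rw [← hPcoe]
          exact Finset.mem_coe.mpr hp.1
        · rw [← hWcoe]
          exact Finset.mem_coe.mpr hp.2
    calc Nat.card {p : V × V // p.1 ∈ ({v3, v4} : Set V) ∧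
        p.2 ∈ ((G.neighborSet v1 \ G.neighborSet v2) ∪
          (G.neighborSet v2 \ G.neighborSet v1)) \ ({v1, v2, v3, v4} : Set V) ∧
        G.Adj p.1 p.2} = ((P ×ˢ WF).filter (fun p => G.Adj p.1 p.2)).card := by
          have h0 : Nat.card {p : V × V // p.1 ∈ ({v3, v4} : Set V) ∧
              p.2 ∈ ((G.neighborSet v1 \ G.neighborSet v2) ∪
                (G.neighborSet v2 \ G.neighborSet v1)) \ ({v1, v2, v3, v4} : Set V) ∧
              G.Adj p.1 p.2} = Set.ncard {p : V × V | p.1 ∈ ({v3, v4} : Set V) ∧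
              p.2 ∈ ((G.neighborSet v1 \ G.neighborSet v2) ∪
                (G.neighborSet v2 \ G.neighborSet v1)) \ ({v1, v2, v3, v4} : Set V) ∧
              G.Adj p.1 p.2} := Nat.card_coe_set_eq _
          rw [h0, hseq, Set.ncard_coe_finset]
      _ = ∑ w ∈ WF, f w := by
          rw [Finset.card_filter, Finset.sum_product, hP, Finset.sum_pair n34,
            ← Finset.sum_add_distrib]
  rw [goal1, goal2]
  by_cases a34 : G.Adj v3 v4
  · have a12 : G.Adj v1 v2 := by
      by_contra h
      exact hne ⟨h, a34⟩
    rw [if_pos a34] at hsAP hsBP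
    rw [if_pos a12] at hB12
    omega
  · rw [if_neg a34] at hsAP hsBP
    by_cases a12 : G.Adj v1 v2
    · rw [if_pos a12] at hB12
      omega
    · rw [if_neg a12] at hB12
      omega
end

section
/- Let G be a graph with distinct vertices v1, v2, v3, v4 such that N(v3) ∪ N(v4) ⊆ N[v1] ∪ N[v2] and d(v3) + d(v4) ≥ d(v1) + d(v2) + 4 + 2·(1[v3v4 ∈ E] − 1[v1v2 ∈ E]). Then there exists j ∈ {1, 2} and two distinct vertices u1, u2 ∈ N(vj) \ (N(v3−j) ∪ {v1,v2,v3,v4}) such that u1 and u2 are both adjacent to v3 and to v4. -/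
open Classical in
/-- Pigeonhole conclusion of inequality (3): one side of the symmetric difference of
`N(v1)` and `N(v2)` contains two common neighbors of `v3` and `v4`. -/
theorem stmt_8 {V : Type*} [Fintype V] (G : SimpleGraph V) (v1 v2 v3 v4 : V)
    (hdist : [v1, v2, v3, v4].Pairwise (· ≠ ·))
    (hcov : G.neighborSet v3 ∪ G.neighborSet v4 ⊆
      insert v1 (G.neighborSet v1) ∪ insert v2 (G.neighborSet v2))
    (hdeg : (deg G v1 : ℤ) + deg G v2 + 4 +
        2 * ((if G.Adj v3 v4 then (1 : ℤ) else 0) - (if G.Adj v1 v2 then (1 : ℤ) else 0)) ≤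
      (deg G v3 : ℤ) + deg G v4) :
    ∃ w w' : V, ((w = v1 ∧ w' = v2) ∨ (w = v2 ∧ w' = v1)) ∧
      ∃ u1 u2 : V, u1 ≠ u2 ∧
        u1 ∈ G.neighborSet w \ (G.neighborSet w' ∪ ({v1, v2, v3, v4} : Set V)) ∧
        u2 ∈ G.neighborSet w \ (G.neighborSet w' ∪ ({v1, v2, v3, v4} : Set V)) ∧
        G.Adj u1 v3 ∧ G.Adj u1 v4 ∧ G.Adj u2 v3 ∧ G.Adj u2 v4 := by
  classical
  simp only [List.pairwise_cons, List.mem_cons, List.mem_singleton, List.not_mem_nil,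
    forall_eq_or_imp, forall_eq] at hdist
  obtain ⟨⟨h12, h13, h14, -⟩, ⟨h23, h24, -⟩, ⟨h34, -⟩, -⟩ := hdist
  set N1 := (G.neighborSet v1).toFinset with hN1
  set N2 := (G.neighborSet v2).toFinset with hN2
  set N3 := (G.neighborSet v3).toFinset with hN3
  set N4 := (G.neighborSet v4).toFinset with hN4
  have memN : ∀ (v u : V), u ∈ (G.neighborSet v).toFinset ↔ G.Adj v u := by
    intro v u; simp
  have hdegeq : ∀ v : V, deg G v = (G.neighborSet v).toFinset.card := by
    intro v; rw [deg, Nat.card_eq_fintype_card, Set.toFinset_card]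
  set S := insert v1 N1 ∪ insert v2 N2 with hS
  set C := N3 ∩ N4 with hC
  set I := N1 ∩ N2 with hI
  set Z := S.filter (fun u => ¬ G.Adj v3 u ∧ ¬ G.Adj v4 u) with hZdef
  set T := C \ (I ∪ {v1, v2}) with hT
  set e12 : ℕ := if G.Adj v1 v2 then 1 else 0 with he12
  set e34 : ℕ := if G.Adj v3 v4 then 1 else 0 with he34
  have memS : ∀ u, u ∈ S ↔ (u = v1 ∨ G.Adj v1 u ∨ u = v2 ∨ G.Adj v2 u) := by
    intro u
    simp only [hS, hN1, hN2, Finset.mem_union, Finset.mem_insert, memN]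
    tauto
  have memC : ∀ u, u ∈ C ↔ G.Adj v3 u ∧ G.Adj v4 u := by
    intro u; simp only [hC, hN3, hN4, Finset.mem_inter, memN]
  have memZ : ∀ u, u ∈ Z ↔ (u ∈ S ∧ ¬ G.Adj v3 u ∧ ¬ G.Adj v4 u) := by
    intro u; simp only [hZdef, Finset.mem_filter]
  have memI : ∀ u, u ∈ I ↔ G.Adj v1 u ∧ G.Adj v2 u := by
    intro u; simp only [hI, hN1, hN2, Finset.mem_inter, memN]
  have hcov' : ∀ u, (G.Adj v3 u ∨ G.Adj v4 u) → u ∈ S := by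
    intro u hu
    have h1 : u ∈ G.neighborSet v3 ∪ G.neighborSet v4 := by
      rcases hu with h | h
      · exact Or.inl h
      · exact Or.inr h
    have h2 := hcov h1
    rw [memS]
    simp only [Set.mem_union, Set.mem_insert_iff, SimpleGraph.mem_neighborSet] at h2
    tauto
  -- Step A
  have stepA : N3.card + N4.card + Z.card ≤ S.card + C.card := by
    have e3 : N3 = S.filter (fun u => G.Adj v3 u) := by
      ext u
      simp only [hN3, memN, Finset.mem_filter]
      exact ⟨fun h => ⟨hcov' u (Or.inl h), h⟩, fun h => h.2⟩
    have e4 : N4 = S.filter (fun u => G.Adj v4 u) := by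
      ext u
      simp only [hN4, memN, Finset.mem_filter]
      exact ⟨fun h => ⟨hcov' u (Or.inr h), h⟩, fun h => h.2⟩
    have eC : C = S.filter (fun u => G.Adj v3 u ∧ G.Adj v4 u) := by
      ext u
      rw [memC, Finset.mem_filter]
      exact ⟨fun h => ⟨hcov' u (Or.inl h.1), h⟩, fun h => h.2⟩
    calc N3.card + N4.card + Z.card
        = ∑ u ∈ S, ((if G.Adj v3 u then 1 else 0) + (if G.Adj v4 u then 1 else 0)
            + (if ¬ G.Adj v3 u ∧ ¬ G.Adj v4 u then 1 else 0)) := by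
          rw [e3, e4, hZdef]
          simp only [Finset.card_filter, Finset.sum_add_distrib]
      _ ≤ ∑ u ∈ S, (1 + (if G.Adj v3 u ∧ G.Adj v4 u then 1 else 0)) := by
          apply Finset.sum_le_sum
          intro u _
          by_cases a : G.Adj v3 u <;> by_cases b : G.Adj v4 u <;> simp [a, b]
      _ = S.card + C.card := by
          rw [eC, Finset.sum_add_distrib, Finset.sum_const, smul_eq_mul, mul_one,
            Finset.card_filter]
  -- Step B
  have hv1N1 : v1 ∉ N1 := by simp [hN1]
  have hv2N2 : v2 ∉ N2 := by simp [hN2]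
  have hIval : (insert v1 N1 ∩ insert v2 N2).card = I.card + 2 * e12 := by
    by_cases e : G.Adj v1 v2
    · have hset : insert v1 N1 ∩ insert v2 N2 = insert v1 (insert v2 I) := by
        ext u
        simp only [Finset.mem_inter, Finset.mem_insert, memI, hN1, hN2, memN]
        constructor
        · rintro ⟨h1 | h1, h2 | h2⟩
          · exact Or.inl h1
          · exact Or.inl h1
          · exact Or.inr (Or.inl h2)
          · exact Or.inr (Or.inr ⟨h1, h2⟩)
        · rintro (rfl | rfl | ⟨ha, hb⟩)
          · exact ⟨Or.inl rfl, Or.inr e.symm⟩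
          · exact ⟨Or.inr e, Or.inl rfl⟩
          · exact ⟨Or.inr ha, Or.inr hb⟩
      have hv1I : v1 ∉ insert v2 I := by
        simp only [Finset.mem_insert, memI]
        rintro (rfl | ⟨ha, _⟩)
        · exact h12 rfl
        · exact G.loopless.irrefl v1 ha
      have hv2I : v2 ∉ I := by
        rw [memI]
        rintro ⟨_, hb⟩
        exact G.loopless.irrefl v2 hb
      rw [hset, Finset.card_insert_of_notMem hv1I, Finset.card_insert_of_notMem hv2I,
        he12, if_pos e]
    · have hset : insert v1 N1 ∩ insert v2 N2 = I := by
        ext u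
        simp only [Finset.mem_inter, Finset.mem_insert, memI, hN1, hN2, memN]
        constructor
        · rintro ⟨h1 | h1, h2 | h2⟩
          · exact absurd (h1 ▸ h2 ▸ rfl : v1 = v2) h12
          · subst h1; exact absurd h2.symm e
          · subst h2; exact absurd h1 e
          · exact ⟨h1, h2⟩
        · rintro ⟨ha, hb⟩
          exact ⟨Or.inr ha, Or.inr hb⟩
      rw [hset, he12, if_neg e, mul_zero, add_zero]
  have stepB : S.card + I.card + 2 * e12 = N1.card + N2.card + 2 := by
    have hu := Finset.card_union_add_card_inter (insert v1 N1) (insert v2 N2)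
    rw [Finset.card_insert_of_notMem hv1N1, Finset.card_insert_of_notMem hv2N2, hIval] at hu
    rw [hS]
    omega
  -- Step C
  have hdeg' : (N1.card : ℤ) + N2.card + 4 + 2 * ((e34 : ℤ) - (e12 : ℤ))
      ≤ (N3.card : ℤ) + N4.card := by
    rw [hdegeq, hdegeq, hdegeq, hdegeq] at hdeg
    have t34 : (if G.Adj v3 v4 then (1 : ℤ) else 0) = (e34 : ℤ) := by
      rw [he34]; split <;> simp
    have t12 : (if G.Adj v1 v2 then (1 : ℤ) else 0) = (e12 : ℤ) := by
      rw [he12]; split <;> simp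
    rw [t34, t12] at hdeg
    exact hdeg
  have stepC : I.card + 2 + 2 * e34 + Z.card ≤ C.card := by omega
  -- Step D : T.card ≥ 3
  have hv3C : v3 ∉ C := by
    rw [memC]; rintro ⟨ha, _⟩; exact G.loopless.irrefl v3 ha
  have hv4C : v4 ∉ C := by
    rw [memC]; rintro ⟨_, hb⟩; exact G.loopless.irrefl v4 hb
  have hm : (C ∩ I).card + (({v3, v4} : Finset V) ∩ I).card ≤ I.card := by
    rw [← Finset.card_union_of_disjoint]
    · apply Finset.card_le_card
      intro u hu
      simp only [Finset.mem_union, Finset.mem_inter] at hu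
      tauto
    · rw [Finset.disjoint_left]
      intro u hu hu'
      simp only [Finset.mem_inter] at hu
      simp only [Finset.mem_inter, Finset.mem_insert, Finset.mem_singleton] at hu'
      rcases hu'.1 with rfl | rfl
      · exact hv3C hu.1
      · exact hv4C hu.1
  have hTcard : T.card + (C ∩ (I ∪ {v1, v2})).card = C.card := by
    rw [hT]
    exact Finset.card_sdiff_add_card_inter C (I ∪ {v1, v2})
  have hsplit : (C ∩ (I ∪ {v1, v2})).card ≤ (C ∩ I).card + (C ∩ {v1, v2}).card := by
    rw [Finset.inter_union_distrib_left]
    exact Finset.card_union_le _ _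
  have hcN2 : (C ∩ ({v1, v2} : Finset V)).card ≤ 2 := by
    calc (C ∩ ({v1, v2} : Finset V)).card ≤ ({v1, v2} : Finset V).card :=
          Finset.card_le_card (Finset.inter_subset_right)
      _ ≤ 2 := Finset.card_insert_le _ _ |>.trans (by simp)
  have hbig : (C ∩ ({v1, v2} : Finset V)).card + 1
      ≤ 2 * e34 + Z.card + (({v3, v4} : Finset V) ∩ I).card := by
    have hcN1 : ∀ x y : V, ({v1, v2} : Finset V) = {x, y} → x ∉ C →
        (C ∩ ({v1, v2} : Finset V)).card ≤ 1 := by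
      intro x y hxy hx
      have : C ∩ ({v1, v2} : Finset V) ⊆ {y} := by
        intro u hu
        rw [hxy] at hu
        simp only [Finset.mem_inter, Finset.mem_insert, Finset.mem_singleton] at hu
        simp only [Finset.mem_singleton]
        rcases hu.2 with rfl | rfl
        · exact absurd hu.1 hx
        · rfl
      calc (C ∩ ({v1, v2} : Finset V)).card ≤ ({y} : Finset V).card :=
            Finset.card_le_card this
        _ = 1 := Finset.card_singleton y
    have hswap : ({v1, v2} : Finset V) = {v2, v1} := by
      ext u; simp [or_comm]
    have hmboth : v1 ∈ C → v2 ∈ C → (({v3, v4} : Finset V) ∩ I).card = 2 := by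
      intro hv1 hv2
      rw [memC] at hv1 hv2
      have : ({v3, v4} : Finset V) ∩ I = {v3, v4} := by
        apply Finset.inter_eq_left.mpr
        intro u hu
        simp only [Finset.mem_insert, Finset.mem_singleton] at hu
        rw [memI]
        rcases hu with rfl | rfl
        · exact ⟨hv1.1.symm, hv2.1.symm⟩
        · exact ⟨hv1.2.symm, hv2.2.symm⟩
      rw [this, Finset.card_insert_of_notMem (by simp [h34]), Finset.card_singleton]
    by_cases a34 : G.Adj v3 v4
    · have he : e34 = 1 := if_pos a34
      by_cases hv1 : v1 ∈ C
      · by_cases hv2 : v2 ∈ C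
        · have := hmboth hv1 hv2
          omega
        · have := hcN1 v2 v1 hswap hv2
          omega
      · have := hcN1 v1 v2 rfl hv1
        omega
    · have he : e34 = 0 := if_neg a34
      have hv3Z : v3 ∈ S → v3 ∈ Z := fun h =>
        (memZ v3).mpr ⟨h, fun hh => G.loopless.irrefl v3 hh, fun hh => a34 hh.symm⟩
      have hv4Z : v4 ∈ S → v4 ∈ Z := fun h =>
        (memZ v4).mpr ⟨h, fun hh => a34 hh, fun hh => G.loopless.irrefl v4 hh⟩
      have hZ2 : v3 ∈ Z → v4 ∈ Z → 2 ≤ Z.card := by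
        intro hz3 hz4
        have : ({v3, v4} : Finset V) ⊆ Z := by
          intro u hu
          simp only [Finset.mem_insert, Finset.mem_singleton] at hu
          rcases hu with rfl | rfl
          · exact hz3
          · exact hz4
        calc 2 = ({v3, v4} : Finset V).card := by
              rw [Finset.card_insert_of_notMem (by simp [h34]), Finset.card_singleton]
          _ ≤ Z.card := Finset.card_le_card this
      by_cases hv1 : v1 ∈ C
      · -- v1 adjacent to both v3, v4; hence v3, v4 ∈ S, so v3, v4 ∈ Z
        have hv1' := (memC v1).mp hv1
        have hz3 := hv3Z ((memS v3).mpr (Or.inr (Or.inl hv1'.1.symm)))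
        have hz4 := hv4Z ((memS v4).mpr (Or.inr (Or.inl hv1'.2.symm)))
        have h2Z := hZ2 hz3 hz4
        by_cases hv2 : v2 ∈ C
        · have := hmboth hv1 hv2
          omega
        · have := hcN1 v2 v1 hswap hv2
          omega
      · by_cases hv2 : v2 ∈ C
        · have hv2' := (memC v2).mp hv2
          have hz3 := hv3Z ((memS v3).mpr (Or.inr (Or.inr (Or.inr hv2'.1.symm))))
          have hz4 := hv4Z ((memS v4).mpr (Or.inr (Or.inr (Or.inr hv2'.2.symm))))
          have h2Z := hZ2 hz3 hz4
          have := hcN1 v1 v2 rfl hv1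
          omega
        · have hcN0 : (C ∩ ({v1, v2} : Finset V)).card = 0 := by
            rw [Finset.card_eq_zero]
            ext u
            simp only [Finset.mem_inter, Finset.mem_insert, Finset.mem_singleton,
              Finset.notMem_empty, iff_false]
            rintro ⟨hu, rfl | rfl⟩
            · exact hv1 hu
            · exact hv2 hu
          have hZ1 : 1 ≤ Z.card := by
            by_cases b3 : G.Adj v1 v3
            · have hz := hv3Z ((memS v3).mpr (Or.inr (Or.inl b3)))
              exact Finset.card_pos.mpr ⟨v3, hz⟩
            · by_cases b4 : G.Adj v1 v4
              · have hz := hv4Z ((memS v4).mpr (Or.inr (Or.inl b4)))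
                exact Finset.card_pos.mpr ⟨v4, hz⟩
              · have hz : v1 ∈ Z := (memZ v1).mpr ⟨(memS v1).mpr (Or.inl rfl),
                  fun hh => b3 hh.symm, fun hh => b4 hh.symm⟩
                exact Finset.card_pos.mpr ⟨v1, hz⟩
          omega
  have hT3 : 3 ≤ T.card := by omega
  -- Step E : pigeonhole
  have hTmem : ∀ u ∈ T, G.Adj v3 u ∧ G.Adj v4 u ∧ u ≠ v1 ∧ u ≠ v2 ∧
      ¬(G.Adj v1 u ∧ G.Adj v2 u) ∧ (G.Adj v1 u ∨ G.Adj v2 u) := by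
    intro u hu
    rw [hT, Finset.mem_sdiff] at hu
    obtain ⟨huC, hnot⟩ := hu
    simp only [Finset.mem_union, Finset.mem_insert, Finset.mem_singleton] at hnot
    push_neg at hnot
    obtain ⟨hnI', hne1, hne2⟩ := hnot
    have hnI : ¬(G.Adj v1 u ∧ G.Adj v2 u) := fun hh => hnI' ((memI u).mpr hh)
    have huC' := (memC u).mp huC
    have huS := (memS u).mp (hcov' u (Or.inl huC'.1))
    refine ⟨huC'.1, huC'.2, hne1, hne2, hnI, ?_⟩
    rcases huS with rfl | h | rfl | h
    · exact absurd rfl hne1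
    · exact Or.inl h
    · exact absurd rfl hne2
    · exact Or.inr h
  -- common neighbors are distinct from v3, v4
  have huv34 : ∀ u, G.Adj v3 u → G.Adj v4 u → u ≠ v3 ∧ u ≠ v4 := by
    intro u ha hb
    constructor
    · rintro rfl; exact G.loopless.irrefl _ ha
    · rintro rfl; exact G.loopless.irrefl _ hb
  have hpart := Finset.card_filter_add_card_filter_not
    (s := T) (p := fun u => G.Adj v1 u)
  by_cases hside : 2 ≤ (T.filter (fun u => G.Adj v1 u)).card
  · obtain ⟨u1, hu1, u2, hu2, hne⟩ := Finset.one_lt_card.mp hside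
    rw [Finset.mem_filter] at hu1 hu2
    refine ⟨v1, v2, Or.inl ⟨rfl, rfl⟩, u1, u2, hne, ?_, ?_, ?_, ?_, ?_, ?_⟩
    · obtain ⟨a3, a4, e1, e2, nI, -⟩ := hTmem u1 hu1.1
      obtain ⟨e3, e4⟩ := huv34 u1 a3 a4
      simp only [Set.mem_diff, SimpleGraph.mem_neighborSet, Set.mem_union, Set.mem_insert_iff,
        Set.mem_singleton_iff]
      push_neg
      exact ⟨hu1.2, fun h => nI ⟨hu1.2, h⟩, e1, e2, e3, e4⟩
    · obtain ⟨a3, a4, e1, e2, nI, -⟩ := hTmem u2 hu2.1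
      obtain ⟨e3, e4⟩ := huv34 u2 a3 a4
      simp only [Set.mem_diff, SimpleGraph.mem_neighborSet, Set.mem_union, Set.mem_insert_iff,
        Set.mem_singleton_iff]
      push_neg
      exact ⟨hu2.2, fun h => nI ⟨hu2.2, h⟩, e1, e2, e3, e4⟩
    · exact ((hTmem u1 hu1.1).1).symm
    · exact ((hTmem u1 hu1.1).2.1).symm
    · exact ((hTmem u2 hu2.1).1).symm
    · exact ((hTmem u2 hu2.1).2.1).symm
  · have hside2 : 2 ≤ (T.filter (fun u => ¬ G.Adj v1 u)).card := by omega
    obtain ⟨u1, hu1, u2, hu2, hne⟩ := Finset.one_lt_card.mp hside2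
    rw [Finset.mem_filter] at hu1 hu2
    have hadj2 : ∀ u ∈ T, ¬ G.Adj v1 u → G.Adj v2 u := by
      intro u hu hn
      rcases (hTmem u hu).2.2.2.2.2 with h | h
      · exact absurd h hn
      · exact h
    refine ⟨v2, v1, Or.inr ⟨rfl, rfl⟩, u1, u2, hne, ?_, ?_, ?_, ?_, ?_, ?_⟩
    · obtain ⟨a3, a4, e1, e2, -, -⟩ := hTmem u1 hu1.1
      obtain ⟨e3, e4⟩ := huv34 u1 a3 a4
      simp only [Set.mem_diff, SimpleGraph.mem_neighborSet, Set.mem_union, Set.mem_insert_iff,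
        Set.mem_singleton_iff]
      push_neg
      exact ⟨hadj2 u1 hu1.1 hu1.2, hu1.2, e1, e2, e3, e4⟩
    · obtain ⟨a3, a4, e1, e2, -, -⟩ := hTmem u2 hu2.1
      obtain ⟨e3, e4⟩ := huv34 u2 a3 a4
      simp only [Set.mem_diff, SimpleGraph.mem_neighborSet, Set.mem_union, Set.mem_insert_iff,
        Set.mem_singleton_iff]
      push_neg
      exact ⟨hadj2 u2 hu2.1 hu2.2, hu2.2, e1, e2, e3, e4⟩
    · exact ((hTmem u1 hu1.1).1).symm
    · exact ((hTmem u1 hu1.1).2.1).symm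
    · exact ((hTmem u2 hu2.1).1).symm
    · exact ((hTmem u2 hu2.1).2.1).symm
end

section
/- Let G be a graph containing distinct vertices v1, v2 of degree 1, a vertex u of degree |V(G)| − 1, and a vertex v of degree 2 with v ∉ {v1, v2, u}. Then there exists a single vertex w whose deletion leaves v, v1, v2 all with degree 1; in particular G has an induced subgraph on |V(G)| − 1 vertices with three vertices of equal degree. -/
lemma deg_eq_ncard {V : Type*} (G : SimpleGraph V) (v : V) :
    deg G v = (G.neighborSet v).ncard := rfl

lemma delDeg_eq_ncard {V : Type*} (G : SimpleGraph V) (D : Finset V) (v : V) :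
    delDeg G D v = (G.neighborSet v \ ↑D).ncard := rfl

/-- If `v1 ≠ v2` have degree 1, `u` has degree `n - 1`, and `v ∉ {v1, v2, u}` has degree 2,
then deleting one vertex `w` leaves `v, v1, v2` all with degree 1. -/
theorem stmt_13 {V : Type*} [Fintype V] (G : SimpleGraph V) (h4 : 4 ≤ Fintype.card V)
    (v1 v2 u v : V) (h12 : v1 ≠ v2)
    (hd1 : deg G v1 = 1) (hd2 : deg G v2 = 1)
    (hdu : deg G u = Fintype.card V - 1) (hdv : deg G v = 2)
    (hv : v ∉ ({v1, v2, u} : Set V)) :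
    ∃ w : V, w ≠ v ∧ w ≠ v1 ∧ w ≠ v2 ∧
      delDeg G {w} v = 1 ∧ delDeg G {w} v1 = 1 ∧ delDeg G {w} v2 = 1 := by
  classical
  simp only [Set.mem_insert_iff, Set.mem_singleton_iff, not_or] at hv
  obtain ⟨hvv1, hvv2, hvu⟩ := hv
  rw [deg_eq_ncard] at hd1 hd2 hdu hdv
  -- u is adjacent to every other vertex
  have hNu : G.neighborSet u = {u}ᶜ := by
    apply Set.eq_of_subset_of_ncard_le
    · intro x hx
      simp only [Set.mem_compl_iff, Set.mem_singleton_iff]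
      exact fun h => G.irrefl (h ▸ hx)
    · rw [hdu]
      have h := Set.ncard_add_ncard_compl ({u} : Set V)
      rw [Set.ncard_singleton, Nat.card_eq_fintype_card] at h
      have : ({u}ᶜ : Set V).ncard = Fintype.card V - 1 := by omega
      omega
    · exact (Set.finite_univ.subset (Set.subset_univ _))
  have hadj : ∀ x : V, x ≠ u → G.Adj u x := by
    intro x hx
    have : x ∈ G.neighborSet u := by rw [hNu]; simpa using hx
    exact this
  have hv1u : v1 ≠ u := by
    intro h; rw [h, hdu] at hd1; omega
  have hv2u : v2 ≠ u := by
    intro h; rw [h, hdu] at hd2; omega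
  -- neighbor set of a degree-1 vertex adjacent to u is {u}
  have key : ∀ x : V, x ≠ u → (G.neighborSet x).ncard = 1 → G.neighborSet x = {u} := by
    intro x hx hd
    symm
    apply Set.eq_of_subset_of_ncard_le
    · intro y hy
      simp only [Set.mem_singleton_iff] at hy
      subst hy
      exact (hadj x hx).symm
    · rw [hd, Set.ncard_singleton]
    · exact (G.neighborSet x).toFinite
  have hN1 : G.neighborSet v1 = {u} := key v1 hv1u hd1
  have hN2 : G.neighborSet v2 = {u} := key v2 hv2u hd2
  -- v has a neighbor w ≠ u
  have huNv : u ∈ G.neighborSet v := (hadj v hvu).symm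
  have hex : ∃ w ∈ G.neighborSet v, w ≠ u := by
    by_contra h
    push_neg at h
    have hsub : G.neighborSet v ⊆ {u} := fun y hy => h y hy
    have := Set.ncard_le_ncard hsub (Set.finite_singleton u)
    rw [hdv, Set.ncard_singleton] at this
    omega
  obtain ⟨w, hwN, hwu⟩ := hex
  have hadjvw : G.Adj v w := hwN
  refine ⟨w, fun h => G.irrefl (h ▸ hadjvw), ?_, ?_, ?_, ?_, ?_⟩
  · intro h
    subst h
    have : v ∈ G.neighborSet w := hadjvw.symm
    rw [hN1] at this
    exact hvu this
  · intro h
    subst h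
    have : v ∈ G.neighborSet w := hadjvw.symm
    rw [hN2] at this
    exact hvu this
  · rw [delDeg_eq_ncard]
    have : ((({w} : Finset V) : Set V)) = ({w} : Set V) := by simp
    rw [this, Set.ncard_diff_singleton_of_mem hwN, hdv]
  · rw [delDeg_eq_ncard, hN1]
    have : (G.neighborSet v1 : Set V) = {u} := hN1
    have hd : ({u} : Set V) \ (({w} : Finset V) : Set V) = {u} := by
      simp only [Finset.coe_singleton]
      rw [Set.diff_singleton_eq_self (by simpa using hwu)]
    rw [hd, Set.ncard_singleton]
  · rw [delDeg_eq_ncard, hN2]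
    have hd : ({u} : Set V) \ (({w} : Finset V) : Set V) = {u} := by
      simp only [Finset.coe_singleton]
      rw [Set.diff_singleton_eq_self (by simpa using hwu)]
    rw [hd, Set.ncard_singleton]
end

section
/- Let G be an n-vertex graph with repetition number exactly 2 in which every vertex has positive degree, and let S ⊆ {1,…,n−1} be the degrees achieved exactly twice and T ⊆ {1,…,n−1} the degrees achieved by no vertex. Suppose there is an injective map assigning to each maximal arithmetic progression of common difference 2 contained in S of length ≥ 2, say {d, d+2, …, d+2j}, the set {d−1, d+1, …, d+2j+1} ⊆ T (mod n−1), and to the remaining elements of S (paired by the relation d, d+1 ∈ S or singletons) disjoint nonempty subsets of T. Then |T| ≥ |S|, contradicting |T| = |S| − 1; hence no such graph exists in which Claims 3–5 all hold. -/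
/-- Representative of `k` modulo `n-1` lying in `{1, ..., n-1}`. -/
def wrap (n k : ℕ) : ℕ := (k - 1) % (n - 1) + 1

lemma wrap_mem (n k : ℕ) (h : 2 ≤ n) : wrap n k ∈ Finset.Icc 1 (n - 1) := by
  unfold wrap
  have := Nat.mod_lt (k - 1) (show 0 < n - 1 by omega)
  simp only [Finset.mem_Icc]
  omega

lemma wrap_sub (n d : ℕ) (h2 : 2 ≤ n) (hd1 : 1 ≤ d) (hdm : d ≤ n - 1) :
    wrap n (d + n - 2) = if d = 1 then n - 1 else d - 1 := by
  unfold wrap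
  rcases eq_or_ne d 1 with rfl | hne
  · have h1 : 1 + n - 2 - 1 = n - 2 := by omega
    rw [h1, Nat.mod_eq_of_lt (by omega)]
    simp; omega
  · have h1 : d + n - 2 - 1 = (d - 2) + (n - 1) := by omega
    rw [h1, Nat.add_mod_right, Nat.mod_eq_of_lt (by omega)]
    simp [hne]; omega

lemma wrap_add1 (n d : ℕ) (h2 : 2 ≤ n) (hd1 : 1 ≤ d) (hdm : d ≤ n - 1) :
    wrap n (d + 1) = if d = n - 1 then 1 else d + 1 := by
  unfold wrap
  rcases eq_or_ne d (n - 1) with rfl | hne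
  · simp [Nat.mod_self]
  · have h1 : d + 1 - 1 = d := by omega
    rw [h1, Nat.mod_eq_of_lt (by omega)]
    simp [hne]

lemma wrap_cross (n d d' : ℕ) (h2 : 2 ≤ n) (hd1 : 1 ≤ d) (hdm : d ≤ n - 1)
    (hd1' : 1 ≤ d') (hdm' : d' ≤ n - 1)
    (h : wrap n (d + 1) = wrap n (d' + n - 2)) : wrap n (d + 2) = d' := by
  unfold wrap at h ⊢
  have e1 : d + 1 - 1 = d := by omega
  have e2 : d' + n - 2 - 1 = (d' + n - 3) := by omega
  rw [e1, e2] at h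
  have h' : d % (n - 1) = (d' + n - 3) % (n - 1) := by omega
  have e3 : d + 2 - 1 = d + 1 := by omega
  rw [e3]
  have key : (d + 1) % (n - 1) = d' - 1 := by
    have c1 : (d + 1) % (n - 1) = (d' + n - 3 + 1) % (n - 1) := by
      rw [Nat.add_mod, h', ← Nat.add_mod]
    have e4 : d' + n - 3 + 1 = (d' - 1) + (n - 1) := by omega
    rw [c1, e4, Nat.add_mod_right, Nat.mod_eq_of_lt (by omega)]
  omega

/-- Number of vertices of degree `e`. -/
noncomputable def degCount {V : Type*} (G : SimpleGraph V) (e : ℕ) : ℕ :=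
  Nat.card {v : V // deg G v = e}

/-- Final counting contradiction: there is no graph with repetition number exactly 2, all
degrees positive, in which Claims 3–5 (on missing degree values, mod `n-1` in `[n-1]`)
all hold. -/
theorem stmt_19 {V : Type*} [Fintype V] (G : SimpleGraph V)
    (hrep2a : ∀ e : ℕ, Nat.card {v : V // deg G v = e} ≤ 2)
    (hrep2b : ∃ e : ℕ, Nat.card {v : V // deg G v = e} = 2)
    (hiso : ∀ v : V, 0 < deg G v)
    (claim3 : ∀ d ∈ Finset.Icc 1 (Fintype.card V - 1),
      Nat.card {v : V // deg G v = d} = 2 →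
        Nat.card {v : V // deg G v = wrap (Fintype.card V) (d + Fintype.card V - 2)} = 0 ∨
        Nat.card {v : V // deg G v = wrap (Fintype.card V) (d + 1)} = 0)
    (claim4 : ∀ d ∈ Finset.Icc 1 (Fintype.card V - 1),
      Nat.card {v : V // deg G v = d} = 2 →
      Nat.card {v : V // deg G v = wrap (Fintype.card V) (d + 1)} = 2 →
        Nat.card {v : V // deg G v = wrap (Fintype.card V) (d + Fintype.card V - 2)} = 0 ∧
        Nat.card {v : V // deg G v = wrap (Fintype.card V) (d + 2)} = 0)
    (claim5 : ∀ d ∈ Finset.Icc 1 (Fintype.card V - 1),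
      Nat.card {v : V // deg G v = d} = 2 →
      Nat.card {v : V // deg G v = wrap (Fintype.card V) (d + 2)} = 2 →
        Nat.card {v : V // deg G v = wrap (Fintype.card V) (d + Fintype.card V - 2)} = 0 ∧
        Nat.card {v : V // deg G v = wrap (Fintype.card V) (d + 1)} = 0 ∧
        Nat.card {v : V // deg G v = wrap (Fintype.card V) (d + 3)} = 0) :
    False := by
  classical
  set n := Fintype.card V with hn
  -- V is nonempty
  obtain ⟨e₀, he₀⟩ := hrep2b
  have hVne : Nonempty V := by
    by_contra h
    rw [not_nonempty_iff] at h
    rw [Nat.card_of_isEmpty] at he₀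
    omega
  -- degree bounds
  have hdeg_le : ∀ v : V, deg G v ≤ n - 1 := by
    intro v
    have hsub : G.neighborSet v ⊆ {v}ᶜ := by
      intro u hu
      simp only [Set.mem_compl_iff, Set.mem_singleton_iff]
      rintro rfl
      exact G.irrefl hu
    have h1 : deg G v ≤ ({v}ᶜ : Set V).ncard := by
      have h0 := Set.ncard_le_ncard hsub (Set.toFinite _)
      have hdv : deg G v = (G.neighborSet v).ncard := Nat.card_coe_set_eq _
      omega
    have h2 : ({v} : Set V).ncard + ({v}ᶜ : Set V).ncard = Nat.card V :=
      Set.ncard_add_ncard_compl _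
    rw [Set.ncard_singleton, Nat.card_eq_fintype_card] at h2
    omega
  have hn2 : 2 ≤ n := by
    obtain ⟨v⟩ := hVne
    have := hiso v
    have := hdeg_le v
    omega
  set m := n - 1 with hm
  have hm1 : 1 ≤ m := by omega
  -- counting function via finsets
  have hcard : ∀ e : ℕ, Nat.card {v : V // deg G v = e}
      = (Finset.univ.filter fun v : V => deg G v = e).card := by
    intro e
    rw [Nat.card_eq_fintype_card, Fintype.card_subtype]
  -- total sum of fiber sizes
  have hfib : ∀ v : V, deg G v ∈ Finset.Icc 1 m := by
    intro v
    simp only [Finset.mem_Icc]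
    exact ⟨hiso v, hdeg_le v⟩
  have hsum : ∑ e ∈ Finset.Icc 1 m, Nat.card {v : V // deg G v = e} = n := by
    have := Finset.card_eq_sum_card_fiberwise (f := deg G) (s := Finset.univ)
      (t := Finset.Icc 1 m) (fun v _ => hfib v)
    rw [Finset.card_univ] at this
    exact (Finset.sum_congr rfl fun e _ => hcard e).trans (by rw [hn, this])
  -- S and T
  set S := (Finset.Icc 1 m).filter (fun e => Nat.card {v : V // deg G v = e} = 2) with hS
  set T := (Finset.Icc 1 m).filter (fun e => Nat.card {v : V // deg G v = e} = 0) with hT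
  have hST : S.card = T.card + 1 := by
    have hpt : ∀ e ∈ Finset.Icc 1 m,
        Nat.card {v : V // deg G v = e} + (if Nat.card {v : V // deg G v = e} = 0 then 1 else 0)
          = 1 + (if Nat.card {v : V // deg G v = e} = 2 then 1 else 0) := by
      intro e _
      have := hrep2a e
      split_ifs <;> omega
    have hsum2 := Finset.sum_congr rfl hpt
    rw [Finset.sum_add_distrib, Finset.sum_add_distrib, hsum,
      ← Finset.card_filter, ← Finset.card_filter, Finset.sum_const,
      Nat.card_Icc, smul_eq_mul, mul_one] at hsum2
    rw [hS, hT]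
    omega
  -- the injection from S to T
  set φ : ℕ → ℕ := fun d =>
    if Nat.card {v : V // deg G v = wrap n (d + n - 2)} = 0
    then wrap n (d + n - 2) else wrap n (d + 1) with hφ
  have hmem : ∀ d ∈ S, 1 ≤ d ∧ d ≤ m ∧ Nat.card {v : V // deg G v = d} = 2 := by
    intro d hd
    rw [hS, Finset.mem_filter, Finset.mem_Icc] at hd
    exact ⟨hd.1.1, hd.1.2, hd.2⟩
  have hmaps : ∀ d ∈ S, φ d ∈ T := by
    intro d hd
    obtain ⟨h1, h2, h3⟩ := hmem d hd
    have hdIcc : d ∈ Finset.Icc 1 m := Finset.mem_Icc.mpr ⟨h1, h2⟩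
    rw [hT, Finset.mem_filter]
    simp only [hφ]
    split_ifs with hc
    · exact ⟨wrap_mem n _ hn2, hc⟩
    · refine ⟨wrap_mem n _ hn2, ?_⟩
      rcases claim3 d hdIcc h3 with h | h
      · exact absurd h hc
      · exact h
  have hinj : Set.InjOn φ ↑S := by
    intro a ha b hb hab
    obtain ⟨ha1, ha2, ha3⟩ := hmem a ha
    obtain ⟨hb1, hb2, hb3⟩ := hmem b hb
    rw [hφ] at hab
    simp only at hab
    split_ifs at hab with hca hcb hcb
    · -- both d-1 branch
      rw [wrap_sub n a hn2 ha1 ha2, wrap_sub n b hn2 hb1 hb2] at hab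
      split_ifs at hab <;> omega
    · -- a uses d-1, b uses d+1 : wrap(b+1) = wrap(a+n-2)
      exfalso
      have hc := wrap_cross n b a hn2 hb1 hb2 ha1 ha2 hab.symm
      have h5 := claim5 b (Finset.mem_Icc.mpr ⟨hb1, hb2⟩) hb3 (by rw [hc]; exact ha3)
      exact hcb h5.1
    · -- a uses d+1, b uses d-1
      exfalso
      have hc := wrap_cross n a b hn2 ha1 ha2 hb1 hb2 hab
      have h5 := claim5 a (Finset.mem_Icc.mpr ⟨ha1, ha2⟩) ha3 (by rw [hc]; exact hb3)
      exact hca h5.1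
    · -- both d+1 branch
      rw [wrap_add1 n a hn2 ha1 ha2, wrap_add1 n b hn2 hb1 hb2] at hab
      split_ifs at hab <;> omega
  have := Finset.card_le_card_of_injOn φ hmaps hinj
  omega
end
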